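/- arXiv:2405.18341 — 2 statements merged into one kernel-verified Lean document; each statement's English description precedes it below -/
import Mathlib

section
/- Convergence in BV norm of integrators: if α_k ∈ BV[a,b], α_k → α in the BV norm ‖β‖_BV = sup_{x∈[a,b]}|β(x)| + Vβ(b), and a bounded f is RDS integrable with respect to each α_k, then f is RDS integrable with respect to α and lim_{k→∞} ∫_a^b f dα_k = ∫_a^b f dα. -/
open Set Filter Topology
open scoped Classical

noncomputable section

/-- A partition `a = x 0 < x 1 < ... < x n = b` of `[a,b]`. -/
structure RDSPartition (a b : ℝ) where
  n : ℕ
  x : ℕ → ℝ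
  mono : ∀ i, i < n → x i < x (i + 1)
  first : x 0 = a
  last : x n = b

/-- Right limit `α(t+)`, with the convention `α(b+) = α(b)` at the right endpoint. -/
def rLim (b : ℝ) (α : ℝ → ℝ) (t : ℝ) : ℝ :=
  if t < b then Function.rightLim α t else α t

/-- Left limit `α(t-)`, with the convention `α(a-) = α(a)` at the left endpoint. -/
def lLim (a : ℝ) (α : ℝ → ℝ) (t : ℝ) : ℝ :=
  if a < t then Function.leftLim α t else α t

/-- `α`-length of the singleton `{t}` inside `[a,b]`: `α(t+) - α(t-)`. -/
def muPt (a b : ℝ) (α : ℝ → ℝ) (t : ℝ) : ℝ :=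
  rLim b α t - lLim a α t

/-- `α`-length of the open interval `(c,d)` inside `[a,b]`: `α(d-) - α(c+)`. -/
def muIoo (a b : ℝ) (α : ℝ → ℝ) (c d : ℝ) : ℝ :=
  lLim a α d - rLim b α c

/-- `f` is a step function with respect to the partition `P`: it is constant on each
open subinterval `(x (i-1), x i)` of `P`. -/
def IsStepOn (a b : ℝ) (f : ℝ → ℝ) (P : RDSPartition a b) : Prop :=
  ∀ i, i < P.n → ∀ s ∈ Set.Ioo (P.x i) (P.x (i + 1)),
    f s = f ((P.x i + P.x (i + 1)) / 2)

/-- The RDS integral of a step function with respect to the partition `P`: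
`Σ_{i=0}^n f(x_i) μ_α({x_i}) + Σ_{i=1}^n c_i μ_α(I_i)`. -/
def stepInt (a b : ℝ) (α : ℝ → ℝ) (P : RDSPartition a b) (f : ℝ → ℝ) : ℝ :=
  (∑ i ∈ Finset.range (P.n + 1), f (P.x i) * muPt a b α (P.x i)) +
    ∑ i ∈ Finset.range P.n,
      f ((P.x i + P.x (i + 1)) / 2) * muIoo a b α (P.x i) (P.x (i + 1))

/-- Upper envelope: infimum of RDS step integrals of step functions above `f` on `[a,b]`. -/
def upperRDS (a b : ℝ) (α f : ℝ → ℝ) : ℝ :=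
  sInf { r | ∃ (u : ℝ → ℝ) (P : RDSPartition a b), IsStepOn a b u P ∧
    (∀ t ∈ Set.Icc a b, f t ≤ u t) ∧ r = stepInt a b α P u }

/-- Lower envelope: supremum of RDS step integrals of step functions below `f` on `[a,b]`. -/
def lowerRDS (a b : ℝ) (α f : ℝ → ℝ) : ℝ :=
  sSup { r | ∃ (v : ℝ → ℝ) (P : RDSPartition a b), IsStepOn a b v P ∧
    (∀ t ∈ Set.Icc a b, v t ≤ f t) ∧ r = stepInt a b α P v }

/-- RDS integrability with respect to an increasing integrator. -/
def RDSIntegrableInc (a b : ℝ) (α f : ℝ → ℝ) : Prop :=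
  lowerRDS a b α f = upperRDS a b α f

/-- The RDS integral with respect to an increasing integrator. -/
def RDSIntegralInc (a b : ℝ) (α f : ℝ → ℝ) : ℝ := upperRDS a b α f

/-- RDS integrability with respect to a BV integrator: some Jordan decomposition
into increasing functions works. -/
def RDSIntegrable (a b : ℝ) (α f : ℝ → ℝ) : Prop :=
  ∃ αp αm : ℝ → ℝ, MonotoneOn αp (Set.Icc a b) ∧ MonotoneOn αm (Set.Icc a b) ∧
    (∀ t ∈ Set.Icc a b, α t = αp t - αm t) ∧
    RDSIntegrableInc a b αp f ∧ RDSIntegrableInc a b αm f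

/-- The RDS integral with respect to a BV integrator. -/
def RDSIntegral (a b : ℝ) (α f : ℝ → ℝ) : ℝ :=
  if h : RDSIntegrable a b α f then
    RDSIntegralInc a b h.choose f - RDSIntegralInc a b h.choose_spec.choose f
  else 0

/-- `f` is bounded on `[a,b]`. -/
def BddOn (a b : ℝ) (f : ℝ → ℝ) : Prop :=
  ∃ M : ℝ, ∀ t ∈ Set.Icc a b, |f t| ≤ M

end


/-- The BV norm on `[a,b]`: `sup_{[a,b]} |β| + Vβ(b)`. -/
noncomputable def BVnorm (a b : ℝ) (β : ℝ → ℝ) : ℝ :=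
  sSup ((fun t => |β t|) '' Set.Icc a b) + (eVariationOn β (Set.Icc a b)).toReal

open Set Filter Topology Function MeasureTheory

namespace RDS14

noncomputable def cl (a b : ℝ) (g : ℝ → ℝ) : ℝ → ℝ := fun t => g (max a (min b t))

lemma clampMem {a b : ℝ} (t : ℝ) (hab : a ≤ b) : max a (min b t) ∈ Icc a b :=
  ⟨le_max_left _ _, max_le hab (min_le_left _ _)⟩

lemma cl_eq_self {a b t : ℝ} (g : ℝ → ℝ) (ht : t ∈ Icc a b) : cl a b g t = g t := by
  simp only [cl, min_eq_right ht.2, max_eq_right ht.1]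

lemma cl_congr {a b : ℝ} {g g' : ℝ → ℝ} (h : EqOn g g' (Icc a b)) (hab : a ≤ b) :
    cl a b g = cl a b g' := by
  funext t; exact h (clampMem t hab)

lemma cl_mono {a b : ℝ} {g : ℝ → ℝ} (hab : a ≤ b) (hg : MonotoneOn g (Icc a b)) :
    Monotone (cl a b g) := by
  intro s t hst
  exact hg (clampMem s hab) (clampMem t hab) (max_le_max le_rfl (min_le_min le_rfl hst))

lemma rightLim_add {G H : ℝ → ℝ} (hG : Monotone G) (hH : Monotone H) (x : ℝ) :
    rightLim (fun t => G t + H t) x = rightLim G x + rightLim H x :=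
  rightLim_eq_of_tendsto
    ((hG.tendsto_rightLim x).add (hH.tendsto_rightLim x))

lemma leftLim_rightLim {G : ℝ → ℝ} (hG : Monotone G) (x : ℝ) :
    leftLim (rightLim G) x = leftLim G x := by
  refine (leftLim_eq_of_tendsto ?_)
  refine tendsto_of_tendsto_of_tendsto_of_le_of_le' (hG.tendsto_leftLim x) tendsto_const_nhds ?_ ?_
  · filter_upwards [self_mem_nhdsWithin] with y _
    exact hG.le_rightLim le_rfl
  · filter_upwards [self_mem_nhdsWithin] with y hy
    exact hG.rightLim_le_leftLim hy

variable {a b : ℝ} {g h : ℝ → ℝ}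

/-- right limit of the clamp agrees with `rLim`. -/
lemma rightLim_cl (hab : a < b) (hg : MonotoneOn g (Icc a b)) {t : ℝ} (ht : t ∈ Icc a b) :
    rightLim (cl a b g) t = rLim b g t := by
  rcases lt_or_eq_of_le ht.2 with htb | htb
  · rw [rLim, if_pos htb]
    have hev : g =ᶠ[𝓝[>] t] cl a b g := by
      filter_upwards [Ioo_mem_nhdsGT_of_mem (⟨le_rfl, htb⟩ : t ∈ Ico t b)] with s hs
      exact (cl_eq_self g ⟨ht.1.trans hs.1.le, hs.2.le⟩).symm
    exact (rightLim_eq_of_tendsto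
      (((cl_mono hab.le hg).tendsto_rightLim t).congr' hev.symm)).symm
  · rw [rLim, if_neg (by rw [htb]; exact lt_irrefl b)]
    refine rightLim_eq_of_tendsto ?_
    have hev : cl a b g =ᶠ[𝓝[>] t] (fun _ => g t) := by
      filter_upwards [self_mem_nhdsWithin] with s hs
      have hbs : b ≤ s := htb ▸ (le_of_lt hs)
      simp only [cl, min_eq_left hbs, max_eq_right hab.le, htb]
    exact tendsto_const_nhds.congr' hev.symm

lemma leftLim_cl (hab : a < b) (hg : MonotoneOn g (Icc a b)) {t : ℝ} (ht : t ∈ Icc a b) :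
    leftLim (cl a b g) t = lLim a g t := by
  rcases lt_or_eq_of_le ht.1 with hat | hat
  · rw [lLim, if_pos hat]
    have hev : g =ᶠ[𝓝[<] t] cl a b g := by
      filter_upwards [Ioo_mem_nhdsLT_of_mem (⟨hat, le_rfl⟩ : t ∈ Ioc a t)] with s hs
      exact (cl_eq_self g ⟨hs.1.le, hs.2.le.trans ht.2⟩).symm
    exact (leftLim_eq_of_tendsto
      (((cl_mono hab.le hg).tendsto_leftLim t).congr' hev.symm)).symm
  · rw [lLim, if_neg (by rw [← hat]; exact lt_irrefl a)]
    refine leftLim_eq_of_tendsto ?_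
    have hev : cl a b g =ᶠ[𝓝[<] t] (fun _ => g t) := by
      filter_upwards [self_mem_nhdsWithin] with s hs
      have hsa : s ≤ a := hat ▸ (le_of_lt hs)
      have : max a (min b s) = a := by
        rw [max_eq_left]
        exact (min_le_right b s).trans hsa
      simp only [cl, this, ← hat]
    exact tendsto_const_nhds.congr' hev.symm

end RDS14
open Set Filter Topology Function MeasureTheory

namespace RDS14

variable {a b : ℝ} {g h : ℝ → ℝ}

/-- Stieltjes measure associated to a monotone-on-`[a,b]` integrator, via clamping. -/
noncomputable def stmeas (a b : ℝ) (g : ℝ → ℝ) : Measure ℝ :=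
  if h : Monotone (cl a b g) then h.stieltjesFunction.measure else 0

lemma stmeas_def (hab : a ≤ b) (hg : MonotoneOn g (Icc a b)) :
    stmeas a b g = (cl_mono hab hg).stieltjesFunction.measure :=
  dif_pos _

lemma stieltjes_coe (hG : Monotone g) : ⇑hG.stieltjesFunction = rightLim g := rfl

lemma stmeas_congr {g2 : ℝ → ℝ} (hab : a ≤ b) (h : EqOn g g2 (Icc a b)) : stmeas a b g = stmeas a b g2 := by
  rw [stmeas, stmeas, cl_congr h hab]

lemma muPt_nonneg (hab : a < b) (hg : MonotoneOn g (Icc a b)) {t : ℝ} (ht : t ∈ Icc a b) :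
    0 ≤ muPt a b g t := by
  rw [muPt, ← rightLim_cl hab hg ht, ← leftLim_cl hab hg ht, sub_nonneg]
  exact (cl_mono hab.le hg).leftLim_le_rightLim le_rfl

lemma muIoo_nonneg (hab : a < b) (hg : MonotoneOn g (Icc a b)) {c d : ℝ}
    (hac : a ≤ c) (hcd : c < d) (hdb : d ≤ b) : 0 ≤ muIoo a b g c d := by
  rw [muIoo, ← rightLim_cl hab hg ⟨hac, hcd.le.trans hdb⟩,
    ← leftLim_cl hab hg ⟨hac.trans hcd.le, hdb⟩, sub_nonneg]
  exact (cl_mono hab.le hg).rightLim_le_leftLim hcd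

lemma stmeas_singleton (hab : a < b) (hg : MonotoneOn g (Icc a b)) {t : ℝ} (ht : t ∈ Icc a b) :
    stmeas a b g {t} = ENNReal.ofReal (muPt a b g t) := by
  rw [stmeas_def hab.le hg, StieltjesFunction.measure_singleton]
  congr 1
  rw [muPt, stieltjes_coe, leftLim_rightLim (cl_mono hab.le hg), rightLim_cl hab hg ht,
    leftLim_cl hab hg ht]

lemma stmeas_Ioo (hab : a < b) (hg : MonotoneOn g (Icc a b)) {c d : ℝ}
    (hac : a ≤ c) (hcd : c < d) (hdb : d ≤ b) :
    stmeas a b g (Ioo c d) = ENNReal.ofReal (muIoo a b g c d) := by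
  rw [stmeas_def hab.le hg, StieltjesFunction.measure_Ioo]
  congr 1
  rw [muIoo, stieltjes_coe, leftLim_rightLim (cl_mono hab.le hg),
    rightLim_cl hab hg ⟨hac, hcd.le.trans hdb⟩, leftLim_cl hab hg ⟨hac.trans hcd.le, hdb⟩]

lemma stmeas_Icc (hab : a < b) (hg : MonotoneOn g (Icc a b)) :
    stmeas a b g (Icc a b) = ENNReal.ofReal (g b - g a) := by
  rw [stmeas_def hab.le hg, StieltjesFunction.measure_Icc]
  congr 1
  rw [stieltjes_coe, leftLim_rightLim (cl_mono hab.le hg),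
    rightLim_cl hab hg (right_mem_Icc.2 hab.le), leftLim_cl hab hg (left_mem_Icc.2 hab.le)]
  rw [rLim, if_neg (lt_irrefl b), lLim, if_neg (lt_irrefl a)]

lemma stmeas_add (hab : a ≤ b) (hg : MonotoneOn g (Icc a b)) (hh : MonotoneOn h (Icc a b)) :
    stmeas a b (fun t => g t + h t) = stmeas a b g + stmeas a b h := by
  have hgh : MonotoneOn (fun t => g t + h t) (Icc a b) := hg.add hh
  rw [stmeas_def hab hgh, stmeas_def hab hg, stmeas_def hab hh,
    ← StieltjesFunction.measure_add]
  congr 1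
  ext x
  rw [StieltjesFunction.add_apply, stieltjes_coe, stieltjes_coe, stieltjes_coe]
  have : cl a b (fun t => g t + h t) = fun t => cl a b g t + cl a b h t := rfl
  rw [this, rightLim_add (cl_mono hab hg) (cl_mono hab hh)]

end RDS14
open Set Filter Topology Function MeasureTheory

namespace RDS14

variable {a b : ℝ} {g h u v f : ℝ → ℝ}

lemma _root_.RDSPartition.x_lt (P : RDSPartition a b) {i j : ℕ} (hij : i < j) (hj : j ≤ P.n) :
    P.x i < P.x j := by
  induction j with
  | zero => omega
  | succ k ih =>
    rcases Nat.lt_succ_iff_lt_or_eq.mp hij with h | h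
    · exact (ih h (by omega)).trans (P.mono k (by omega))
    · subst h; exact P.mono i (by omega)

lemma _root_.RDSPartition.x_le (P : RDSPartition a b) {i j : ℕ} (hij : i ≤ j) (hj : j ≤ P.n) :
    P.x i ≤ P.x j := by
  rcases lt_or_eq_of_le hij with h | h
  · exact (P.x_lt h hj).le
  · subst h; rfl

lemma _root_.RDSPartition.x_mem (P : RDSPartition a b) {i : ℕ} (hi : i ≤ P.n) : P.x i ∈ Icc a b := by
  refine ⟨le_of_le_of_eq (le_of_eq P.first.symm) rfl |>.trans (P.x_le (Nat.zero_le _) hi), (P.x_le hi le_rfl).trans (le_of_eq P.last)⟩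

lemma _root_.RDSPartition.x_inj (P : RDSPartition a b) {i j : ℕ} (hi : i ≤ P.n) (hj : j ≤ P.n)
    (hx : P.x i = P.x j) : i = j := by
  rcases lt_trichotomy i j with h | h | h
  · exact absurd hx (P.x_lt h hj).ne
  · exact h
  · exact absurd hx.symm (P.x_lt h hi).ne

lemma _root_.RDSPartition.not_mem_Ioo (P : RDSPartition a b) {k j : ℕ} (hk : k ≤ P.n) (hj : j < P.n) :
    P.x k ∉ Ioo (P.x j) (P.x (j + 1)) := by
  intro hmem
  rcases le_or_gt k j with h | h
  · exact absurd (P.x_le h (by omega)) (not_le.2 hmem.1)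
  · exact absurd (P.x_le h hk) (not_le.2 hmem.2)

lemma _root_.RDSPartition.locate (P : RDSPartition a b) {t : ℝ} (ht : t ∈ Icc a b) :
    (∃ i ≤ P.n, t = P.x i) ∨ ∃ i < P.n, t ∈ Ioo (P.x i) (P.x (i + 1)) := by
  classical
  set s : Finset ℕ := (Finset.range (P.n + 1)).filter (fun i => P.x i ≤ t) with hs
  have h0 : (0 : ℕ) ∈ s := by
    simp only [hs, Finset.mem_filter, Finset.mem_range]
    refine ⟨by omega, ?_⟩
    rw [P.first]; exact ht.1
  have hne : s.Nonempty := ⟨0, h0⟩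
  set i0 := s.max' hne with hi0
  have hi0mem : i0 ∈ s := s.max'_mem hne
  have hi0n : i0 ≤ P.n := by
    have := (Finset.mem_filter.1 hi0mem).1
    simp only [Finset.mem_range] at this; omega
  have hxi0 : P.x i0 ≤ t := (Finset.mem_filter.1 hi0mem).2
  rcases eq_or_lt_of_le hxi0 with h | h
  · exact Or.inl ⟨i0, hi0n, h.symm⟩
  · have hi0n' : i0 < P.n := by
      rcases eq_or_lt_of_le hi0n with h' | h'
      · exfalso
        have hxb : P.x i0 = b := by rw [h']; exact P.last
        rw [hxb] at h
        exact absurd ht.2 (not_le.2 h)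
      · exact h'
    refine Or.inr ⟨i0, hi0n', h, ?_⟩
    by_contra hcon
    push_neg at hcon
    have : i0 + 1 ∈ s := by
      simp only [hs, Finset.mem_filter, Finset.mem_range]
      exact ⟨by omega, hcon⟩
    have := Finset.le_max' s _ this
    omega

/-- The trivial partition `a < b`. -/
def trivP (hab : a < b) : RDSPartition a b where
  n := 1
  x := fun i => if i = 0 then a else b
  mono := by intro i hi; simp only [Nat.lt_one_iff] at hi; subst hi; simpa using hab
  first := rfl
  last := by norm_num

lemma isStepOn_const (hab : a < b) (c : ℝ) : IsStepOn a b (fun _ => c) (trivP hab) := by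
  intro i _ s _; rfl

lemma indicator_step_decomp (hab : a < b) (P : RDSPartition a b) (hu : IsStepOn a b u P) :
    (Icc a b).indicator u = fun t =>
      (∑ i ∈ Finset.range (P.n + 1), ({P.x i} : Set ℝ).indicator (fun _ => u (P.x i)) t) +
      ∑ i ∈ Finset.range P.n,
        (Ioo (P.x i) (P.x (i + 1))).indicator
          (fun _ => u ((P.x i + P.x (i + 1)) / 2)) t := by
  funext t
  by_cases ht : t ∈ Icc a b
  · rw [indicator_of_mem ht]
    rcases P.locate ht with ⟨j, hj, hxj⟩ | ⟨j, hj, hxj⟩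
    · rw [Finset.sum_eq_single j, Finset.sum_eq_zero, indicator_of_mem (by simp [hxj])]
      · simp [hxj]
      · intro i hi
        simp only [Finset.mem_range] at hi
        refine indicator_of_notMem (fun hmem => ?_) _
        exact P.not_mem_Ioo (k := j) hj hi (hxj ▸ hmem)
      · intro i hi hij
        simp only [Finset.mem_range] at hi
        refine indicator_of_notMem (fun hmem => ?_) _
        rw [mem_singleton_iff] at hmem
        exact hij (P.x_inj hj (by omega) (hxj ▸ hmem : P.x j = P.x i)).symm
      · intro hcon
        exact absurd (Finset.mem_range.2 (by omega)) hcon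
    · rw [Finset.sum_eq_zero, Finset.sum_eq_single j,
        indicator_of_mem hxj, zero_add]
      · exact hu j hj t hxj
      · intro i hi hij
        simp only [Finset.mem_range] at hi
        refine indicator_of_notMem (fun hmem => ?_) _
        rcases lt_or_gt_of_ne hij with hlt | hlt
        · exact absurd ((P.x_le (show i + 1 ≤ j by omega) (by omega)).trans' hmem.2.le)
            (not_le.2 hxj.1)
        · exact absurd (((P.x_le (show j + 1 ≤ i by omega) (by omega)).trans hmem.1.le).trans_lt hxj.2).false id
      · intro hcon
        exact absurd (Finset.mem_range.2 hj) hcon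
      · intro i hi
        simp only [Finset.mem_range] at hi
        refine indicator_of_notMem (fun hmem => ?_) _
        rw [mem_singleton_iff] at hmem
        exact P.not_mem_Ioo (k := i) (by omega) hj (hmem ▸ hxj)
  · rw [indicator_of_notMem ht]
    rw [Finset.sum_eq_zero, Finset.sum_eq_zero, add_zero]
    · intro i hi
      simp only [Finset.mem_range] at hi
      refine indicator_of_notMem (fun hmem => ?_) _
      exact ht ⟨(P.x_mem (by omega : i ≤ P.n)).1.trans hmem.1.le,
        hmem.2.le.trans (P.x_mem (by omega : i + 1 ≤ P.n)).2⟩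
    · intro i hi
      simp only [Finset.mem_range] at hi
      refine indicator_of_notMem (fun hmem => ?_) _
      rw [mem_singleton_iff] at hmem
      exact ht (hmem ▸ P.x_mem (by omega : i ≤ P.n))

end RDS14
open Set Filter Topology Function MeasureTheory

namespace RDS14

variable {a b : ℝ} {g h u v f : ℝ → ℝ}

lemma integrable_indicator_step (hab : a < b) (hg : MonotoneOn g (Icc a b))
    (P : RDSPartition a b) (hu : IsStepOn a b u P) :
    Integrable ((Icc a b).indicator u) (stmeas a b g) := by
  rw [indicator_step_decomp hab P hu]
  apply Integrable.add
  · apply integrable_finset_sum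
    intro i hi
    simp only [Finset.mem_range] at hi
    rw [integrable_indicator_iff (measurableSet_singleton _)]
    refine (integrableOn_const_iff (by finiteness)).2 (Or.inr ?_)
    rw [stmeas_singleton hab hg (P.x_mem (by omega : i ≤ P.n))]
    exact ENNReal.ofReal_lt_top
  · apply integrable_finset_sum
    intro i hi
    simp only [Finset.mem_range] at hi
    rw [integrable_indicator_iff measurableSet_Ioo]
    refine (integrableOn_const_iff (by finiteness)).2 (Or.inr ?_)
    rw [stmeas_Ioo hab hg (P.x_mem (by omega : i ≤ P.n)).1 (P.mono i hi)
      (P.x_mem (by omega : i + 1 ≤ P.n)).2]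
    exact ENNReal.ofReal_lt_top

lemma stepInt_eq_integral (hab : a < b) (hg : MonotoneOn g (Icc a b))
    (P : RDSPartition a b) (hu : IsStepOn a b u P) :
    stepInt a b g P u = ∫ t, (Icc a b).indicator u t ∂(stmeas a b g) := by
  have hdec := indicator_step_decomp hab P hu
  rw [hdec]
  have hint1 : ∀ i ∈ Finset.range (P.n + 1),
      Integrable (({P.x i} : Set ℝ).indicator (fun _ => u (P.x i))) (stmeas a b g) := by
    intro i hi
    simp only [Finset.mem_range] at hi
    rw [integrable_indicator_iff (measurableSet_singleton _)]
    refine (integrableOn_const_iff (by finiteness)).2 (Or.inr ?_)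
    rw [stmeas_singleton hab hg (P.x_mem (by omega : i ≤ P.n))]
    exact ENNReal.ofReal_lt_top
  have hint2 : ∀ i ∈ Finset.range P.n,
      Integrable ((Ioo (P.x i) (P.x (i + 1))).indicator
        (fun _ => u ((P.x i + P.x (i + 1)) / 2))) (stmeas a b g) := by
    intro i hi
    simp only [Finset.mem_range] at hi
    rw [integrable_indicator_iff measurableSet_Ioo]
    refine (integrableOn_const_iff (by finiteness)).2 (Or.inr ?_)
    rw [stmeas_Ioo hab hg (P.x_mem (by omega : i ≤ P.n)).1 (P.mono i hi)
      (P.x_mem (by omega : i + 1 ≤ P.n)).2]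
    exact ENNReal.ofReal_lt_top
  rw [integral_add (integrable_finset_sum _ hint1) (integrable_finset_sum _ hint2),
    integral_finset_sum _ hint1, integral_finset_sum _ hint2]
  rw [stepInt]
  congr 1
  · apply Finset.sum_congr rfl
    intro i hi
    simp only [Finset.mem_range] at hi
    rw [integral_indicator_const _ (measurableSet_singleton _), measureReal_def,
      stmeas_singleton hab hg (P.x_mem (by omega : i ≤ P.n)),
      ENNReal.toReal_ofReal (muPt_nonneg hab hg (P.x_mem (by omega : i ≤ P.n))),
      smul_eq_mul, mul_comm]
  · apply Finset.sum_congr rfl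
    intro i hi
    simp only [Finset.mem_range] at hi
    have h1 := (P.x_mem (by omega : i ≤ P.n)).1
    have h2 := P.mono i hi
    have h3 := (P.x_mem (by omega : i + 1 ≤ P.n)).2
    rw [integral_indicator_const _ measurableSet_Ioo, measureReal_def, stmeas_Ioo hab hg h1 h2 h3,
      ENNReal.toReal_ofReal (muIoo_nonneg hab hg h1 h2 h3), smul_eq_mul, mul_comm]

/-- Master comparison: step integrals are monotone in the integrand. -/
lemma stepInt_le_stepInt (hab : a < b) (hg : MonotoneOn g (Icc a b))
    {P Q : RDSPartition a b} (hu : IsStepOn a b u P) (hv : IsStepOn a b v Q)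
    (hle : ∀ t ∈ Icc a b, v t ≤ u t) :
    stepInt a b g Q v ≤ stepInt a b g P u := by
  rw [stepInt_eq_integral hab hg P hu, stepInt_eq_integral hab hg Q hv]
  refine integral_mono (integrable_indicator_step hab hg Q hv)
    (integrable_indicator_step hab hg P hu) ?_
  intro t
  by_cases ht : t ∈ Icc a b
  · rw [indicator_of_mem ht, indicator_of_mem ht]; exact hle t ht
  · rw [indicator_of_notMem ht, indicator_of_notMem ht]

/-- Congruence for `stepInt` of step functions in the integrator. -/
lemma stepInt_congr {g2 : ℝ → ℝ} (hab : a < b) (hg : MonotoneOn g (Icc a b))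
    (hg2 : MonotoneOn g2 (Icc a b)) (hgg : EqOn g g2 (Icc a b))
    (P : RDSPartition a b) (hu : IsStepOn a b u P) :
    stepInt a b g P u = stepInt a b g2 P u := by
  rw [stepInt_eq_integral hab hg P hu, stepInt_eq_integral hab hg2 P hu,
    stmeas_congr hab.le hgg]

/-- Additivity in the integrator for step functions. -/
lemma stepInt_add_integrator (hab : a < b) (hg : MonotoneOn g (Icc a b))
    (hh : MonotoneOn h (Icc a b)) (P : RDSPartition a b) (hu : IsStepOn a b u P) :
    stepInt a b (fun t => g t + h t) P u = stepInt a b g P u + stepInt a b h P u := by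
  rw [stepInt_eq_integral hab (hg.add hh) P hu, stepInt_eq_integral hab hg P hu,
    stepInt_eq_integral hab hh P hu, stmeas_add hab.le hg hh,
    integral_add_measure (integrable_indicator_step hab hg P hu)
      (integrable_indicator_step hab hh P hu)]

lemma stepInt_const (hab : a < b) (hg : MonotoneOn g (Icc a b)) (c : ℝ) :
    stepInt a b g (trivP hab) (fun _ => c) = c * (g b - g a) := by
  rw [stepInt_eq_integral hab hg _ (isStepOn_const hab c)]
  have : (fun t => (Icc a b).indicator (fun _ => c) t) = (Icc a b).indicator (fun _ => c) := rfl
  rw [integral_indicator_const _ measurableSet_Icc, measureReal_def, stmeas_Icc hab hg, smul_eq_mul,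
    ENNReal.toReal_ofReal (sub_nonneg.2 (hg (left_mem_Icc.2 hab.le) (right_mem_Icc.2 hab.le) hab.le)),
    mul_comm]

end RDS14
open Set Filter Topology Function MeasureTheory

namespace RDS14

variable {a b : ℝ} {g h u v f : ℝ → ℝ}

lemma exists_enclosing (P : RDSPartition a b) {c d : ℝ} (hc : c ∈ Icc a b) (hd : d ∈ Icc a b)
    (hcd : c < d) (hnp : ∀ i ≤ P.n, P.x i ∉ Ioo c d) :
    ∃ i < P.n, Ioo c d ⊆ Ioo (P.x i) (P.x (i + 1)) := by
  classical
  set s : Finset ℕ := (Finset.range (P.n + 1)).filter (fun i => P.x i ≤ c) with hs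
  have h0 : (0 : ℕ) ∈ s := by
    simp only [hs, Finset.mem_filter, Finset.mem_range]
    refine ⟨by omega, ?_⟩
    rw [P.first]; exact hc.1
  have hne : s.Nonempty := ⟨0, h0⟩
  set i0 := s.max' hne with hi0
  have hi0mem : i0 ∈ s := s.max'_mem hne
  have hi0n : i0 ≤ P.n := by
    have := (Finset.mem_filter.1 hi0mem).1
    simp only [Finset.mem_range] at this; omega
  have hxi0 : P.x i0 ≤ c := (Finset.mem_filter.1 hi0mem).2
  have hi0n' : i0 < P.n := by
    rcases eq_or_lt_of_le hi0n with h' | h'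
    · exfalso
      have hxb : P.x i0 = b := by rw [h']; exact P.last
      rw [hxb] at hxi0
      exact absurd (hd.2.trans_lt' hcd) (not_lt.2 hxi0)
    · exact h'
  have hgt : c < P.x (i0 + 1) := by
    by_contra hcon
    push_neg at hcon
    have : i0 + 1 ∈ s := by
      simp only [hs, Finset.mem_filter, Finset.mem_range]
      exact ⟨by omega, hcon⟩
    have := Finset.le_max' s _ this
    omega
  have hge : d ≤ P.x (i0 + 1) := by
    by_contra hcon
    push_neg at hcon
    exact hnp (i0 + 1) (by omega) ⟨hgt, hcon⟩
  exact ⟨i0, hi0n', fun t ht => ⟨hxi0.trans_lt ht.1, ht.2.trans_le hge⟩⟩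

/-- If every point of `P` is a point of `R`, a step function on `P` is a step function on `R`. -/
lemma _root_.IsStepOn.refine {P R : RDSPartition a b} (hu : IsStepOn a b u P)
    (hsub : ∀ i ≤ P.n, ∃ j ≤ R.n, R.x j = P.x i) : IsStepOn a b u R := by
  intro j hj s hmem
  have hnp : ∀ i ≤ P.n, P.x i ∉ Ioo (R.x j) (R.x (j + 1)) := by
    intro i hi hmem'
    obtain ⟨j', hj', hxj'⟩ := hsub i hi
    exact R.not_mem_Ioo hj' hj (hxj' ▸ hmem')
  obtain ⟨i, hi, hIoo⟩ := exists_enclosing P (R.x_mem (by omega : j ≤ R.n))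
    (R.x_mem (by omega : j + 1 ≤ R.n)) (R.mono j hj) hnp
  have hmid : (R.x j + R.x (j + 1)) / 2 ∈ Ioo (R.x j) (R.x (j + 1)) :=
    ⟨by linarith [R.mono j hj], by linarith [R.mono j hj]⟩
  rw [hu i hi s (hIoo hmem), hu i hi _ (hIoo hmid)]

/-- Partition from a finite set of points. -/
noncomputable def ofFinset (S : Finset ℝ) (ha : a ∈ S) (hb : b ∈ S)
    (hsub : ∀ t ∈ S, t ∈ Icc a b) : RDSPartition a b where
  n := S.card - 1
  x := fun i => (S.sort (· ≤ ·)).getD i b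
  mono := by
    intro i hi
    have hlen : (S.sort (· ≤ ·)).length = S.card := Finset.length_sort _
    have hcard : 1 ≤ S.card := Finset.card_pos.2 ⟨a, ha⟩
    have h1 : i < (S.sort (· ≤ ·)).length := by omega
    have h2 : i + 1 < (S.sort (· ≤ ·)).length := by omega
    show (S.sort (· ≤ ·)).getD i b < (S.sort (· ≤ ·)).getD (i + 1) b
    rw [List.getD_eq_getElem _ _ h1, List.getD_eq_getElem _ _ h2]
    have slt : (S.sort (· ≤ ·)).Pairwise (· < ·) :=
      (Finset.sortedLT_sort S).pairwise
    exact List.pairwise_iff_getElem.1 slt i (i + 1) h1 h2 (by omega)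
  first := by
    have hlen : (S.sort (· ≤ ·)).length = S.card := Finset.length_sort _
    have hcard : 1 ≤ S.card := Finset.card_pos.2 ⟨a, ha⟩
    have h0 : 0 < (S.sort (· ≤ ·)).length := by omega
    show (S.sort (· ≤ ·)).getD 0 b = a
    rw [List.getD_eq_getElem _ _ h0]
    have hmem : (S.sort (· ≤ ·))[0] ∈ S := by
      rw [← Finset.mem_sort (α := ℝ) (· ≤ ·)]
      exact List.getElem_mem _
    have hle : a ≤ (S.sort (· ≤ ·))[0] := (hsub _ hmem).1
    obtain ⟨k, hk, hka⟩ := List.mem_iff_getElem.1 ((Finset.mem_sort (α := ℝ) (· ≤ ·)).2 ha)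
    refine le_antisymm ?_ hle
    rcases Nat.eq_zero_or_pos k with rfl | hk0
    · exact le_of_eq hka
    · rw [← hka]
      exact List.pairwise_iff_getElem.1 (Finset.pairwise_sort S (· ≤ ·)) 0 k h0 hk hk0
  last := by
    have hlen : (S.sort (· ≤ ·)).length = S.card := Finset.length_sort _
    have hcard : 1 ≤ S.card := Finset.card_pos.2 ⟨a, ha⟩
    have hn : S.card - 1 < (S.sort (· ≤ ·)).length := by omega
    show (S.sort (· ≤ ·)).getD (S.card - 1) b = b
    rw [List.getD_eq_getElem _ _ hn]
    have hmem : (S.sort (· ≤ ·))[S.card - 1] ∈ S := by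
      rw [← Finset.mem_sort (α := ℝ) (· ≤ ·)]
      exact List.getElem_mem _
    obtain ⟨k, hk, hkb⟩ := List.mem_iff_getElem.1 ((Finset.mem_sort (α := ℝ) (· ≤ ·)).2 hb)
    refine le_antisymm (hsub _ hmem).2 ?_
    rcases eq_or_lt_of_le (show k ≤ S.card - 1 by omega) with h | h
    · subst h; rw [hkb]
    · rw [← hkb]
      exact List.pairwise_iff_getElem.1 (Finset.pairwise_sort S (· ≤ ·)) k (S.card - 1) hk hn h

lemma ofFinset_exists_idx (S : Finset ℝ) (ha : a ∈ S) (hb : b ∈ S)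
    (hsub : ∀ t ∈ S, t ∈ Icc a b) {t : ℝ} (ht : t ∈ S) :
    ∃ j ≤ (ofFinset S ha hb hsub).n, (ofFinset S ha hb hsub).x j = t := by
  have hlen : (S.sort (· ≤ ·)).length = S.card := Finset.length_sort _
  obtain ⟨k, hk, hkt⟩ := List.mem_iff_getElem.1 ((Finset.mem_sort (α := ℝ) (· ≤ ·)).2 ht)
  refine ⟨k, by simp only [ofFinset]; omega, ?_⟩
  show (S.sort (· ≤ ·)).getD k b = t
  rw [List.getD_eq_getElem _ _ hk, hkt]

end RDS14
open Set Filter Topology Function MeasureTheory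

namespace RDS14

variable {a b M : ℝ} {g h u v f : ℝ → ℝ}

def USet (a b : ℝ) (α f : ℝ → ℝ) : Set ℝ :=
  { r | ∃ (u : ℝ → ℝ) (P : RDSPartition a b), IsStepOn a b u P ∧
    (∀ t ∈ Set.Icc a b, f t ≤ u t) ∧ r = stepInt a b α P u }

def LSet (a b : ℝ) (α f : ℝ → ℝ) : Set ℝ :=
  { r | ∃ (v : ℝ → ℝ) (P : RDSPartition a b), IsStepOn a b v P ∧
    (∀ t ∈ Set.Icc a b, v t ≤ f t) ∧ r = stepInt a b α P v }

lemma upperRDS_eq (α f : ℝ → ℝ) : upperRDS a b α f = sInf (USet a b α f) := rfl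
lemma lowerRDS_eq (α f : ℝ → ℝ) : lowerRDS a b α f = sSup (LSet a b α f) := rfl

noncomputable def pts (P : RDSPartition a b) : Finset ℝ := (Finset.range (P.n + 1)).image P.x

lemma pts_sub (P : RDSPartition a b) : ∀ t ∈ pts P, t ∈ Icc a b := by
  intro t ht
  simp only [pts, Finset.mem_image, Finset.mem_range] at ht
  obtain ⟨i, hi, rfl⟩ := ht
  exact P.x_mem (by omega)

lemma a_mem_pts (P : RDSPartition a b) : a ∈ pts P := by
  simp only [pts, Finset.mem_image, Finset.mem_range]
  exact ⟨0, by omega, P.first⟩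

lemma b_mem_pts (P : RDSPartition a b) : b ∈ pts P := by
  simp only [pts, Finset.mem_image, Finset.mem_range]
  exact ⟨P.n, by omega, P.last⟩

noncomputable def merge (P Q : RDSPartition a b) : RDSPartition a b :=
  ofFinset (pts P ∪ pts Q) (Finset.mem_union_left _ (a_mem_pts P))
    (Finset.mem_union_left _ (b_mem_pts P))
    (fun t ht => by
      rcases Finset.mem_union.1 ht with h | h
      exacts [pts_sub P t h, pts_sub Q t h])

lemma merge_refines_left (P Q : RDSPartition a b) :
    ∀ i ≤ P.n, ∃ j ≤ (merge P Q).n, (merge P Q).x j = P.x i := by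
  intro i hi
  exact ofFinset_exists_idx _ _ _ _
    (Finset.mem_union_left _ (by
      simp only [pts, Finset.mem_image, Finset.mem_range]
      exact ⟨i, by omega, rfl⟩))

lemma merge_refines_right (P Q : RDSPartition a b) :
    ∀ i ≤ Q.n, ∃ j ≤ (merge P Q).n, (merge P Q).x j = Q.x i := by
  intro i hi
  exact ofFinset_exists_idx _ _ _ _
    (Finset.mem_union_right _ (by
      simp only [pts, Finset.mem_image, Finset.mem_range]
      exact ⟨i, by omega, rfl⟩))

section envelopes

variable (hab : a < b) (hg : MonotoneOn g (Icc a b)) (hf : ∀ t ∈ Icc a b, |f t| ≤ M)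

include hab hg hf

lemma USet_mem_const : M * (g b - g a) ∈ USet a b g f :=
  ⟨fun _ => M, trivP hab, isStepOn_const hab M,
    fun t ht => (abs_le.1 (hf t ht)).2, (stepInt_const hab hg M).symm⟩

lemma LSet_mem_const : (-M) * (g b - g a) ∈ LSet a b g f :=
  ⟨fun _ => -M, trivP hab, isStepOn_const hab (-M),
    fun t ht => (abs_le.1 (hf t ht)).1, (stepInt_const hab hg (-M)).symm⟩

lemma USet_nonempty : (USet a b g f).Nonempty := ⟨_, USet_mem_const hab hg hf⟩
lemma LSet_nonempty : (LSet a b g f).Nonempty := ⟨_, LSet_mem_const hab hg hf⟩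

omit hf in
lemma LSet_le_USet : ∀ r ∈ LSet a b g f, ∀ s ∈ USet a b g f, r ≤ s := by
  rintro r ⟨v, Q, hv, hvf, rfl⟩ s ⟨u, P, hu, hfu, rfl⟩
  exact stepInt_le_stepInt hab hg hu hv (fun t ht => (hvf t ht).trans (hfu t ht))

lemma USet_bddBelow : BddBelow (USet a b g f) :=
  ⟨(-M) * (g b - g a), fun s hs => LSet_le_USet hab hg _ (LSet_mem_const hab hg hf) s hs⟩

lemma LSet_bddAbove : BddAbove (LSet a b g f) :=
  ⟨M * (g b - g a), fun r hr => LSet_le_USet hab hg r hr _ (USet_mem_const hab hg hf)⟩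

lemma lower_le_upper : lowerRDS a b g f ≤ upperRDS a b g f := by
  rw [lowerRDS_eq, upperRDS_eq]
  refine csSup_le (LSet_nonempty hab hg hf) (fun r hr => ?_)
  exact le_csInf (USet_nonempty hab hg hf) (fun s hs => LSet_le_USet hab hg r hr s hs)

lemma upper_le_stepInt {P : RDSPartition a b} (hu : IsStepOn a b u P)
    (hfu : ∀ t ∈ Icc a b, f t ≤ u t) : upperRDS a b g f ≤ stepInt a b g P u := by
  rw [upperRDS_eq]
  exact csInf_le (USet_bddBelow hab hg hf) ⟨u, P, hu, hfu, rfl⟩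

lemma stepInt_le_lower {Q : RDSPartition a b} (hv : IsStepOn a b v Q)
    (hvf : ∀ t ∈ Icc a b, v t ≤ f t) : stepInt a b g Q v ≤ lowerRDS a b g f := by
  rw [lowerRDS_eq]
  exact le_csSup (LSet_bddAbove hab hg hf) ⟨v, Q, hv, hvf, rfl⟩

lemma upper_le_bound : upperRDS a b g f ≤ M * (g b - g a) := by
  rw [← stepInt_const hab hg M]
  exact upper_le_stepInt hab hg hf (isStepOn_const hab M) (fun t ht => (abs_le.1 (hf t ht)).2)

lemma bound_le_lower : (-M) * (g b - g a) ≤ lowerRDS a b g f := by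
  rw [← stepInt_const hab hg (-M)]
  exact stepInt_le_lower hab hg hf (isStepOn_const hab (-M)) (fun t ht => (abs_le.1 (hf t ht)).1)

end envelopes

end RDS14
open Set Filter Topology Function MeasureTheory

namespace RDS14

variable {a b M : ℝ} {g h u v f : ℝ → ℝ}

section sums

variable (hab : a < b) (hg : MonotoneOn g (Icc a b)) (hh : MonotoneOn h (Icc a b))
  (hf : ∀ t ∈ Icc a b, |f t| ≤ M)

include hab hg hh hf

lemma upper_add_le :
    upperRDS a b (fun t => g t + h t) f ≤ upperRDS a b g f + upperRDS a b h f := by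
  have key : ∀ r ∈ USet a b g f, ∀ s ∈ USet a b h f,
      upperRDS a b (fun t => g t + h t) f ≤ r + s := by
    rintro r ⟨u1, P1, hu1, hfu1, rfl⟩ s ⟨u2, P2, hu2, hfu2, rfl⟩
    have hu1R : IsStepOn a b u1 (merge P1 P2) := hu1.refine (merge_refines_left P1 P2)
    have hu2R : IsStepOn a b u2 (merge P1 P2) := hu2.refine (merge_refines_right P1 P2)
    have hmR : IsStepOn a b (fun t => min (u1 t) (u2 t)) (merge P1 P2) := by
      intro j hj s hs
      simp only
      rw [hu1R j hj s hs, hu2R j hj s hs]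
    have h1 := upper_le_stepInt hab (hg.add hh) hf hmR
      (fun t ht => le_min (hfu1 t ht) (hfu2 t ht))
    have h2 := stepInt_add_integrator hab hg hh (merge P1 P2) hmR
    have h3 := stepInt_le_stepInt hab hg hu1 hmR (fun t _ => min_le_left (u1 t) (u2 t))
    have h4 := stepInt_le_stepInt hab hh hu2 hmR (fun t _ => min_le_right (u1 t) (u2 t))
    linarith
  have step1 : ∀ r ∈ USet a b g f,
      upperRDS a b (fun t => g t + h t) f - r ≤ upperRDS a b h f := by
    intro r hr
    rw [upperRDS_eq (α := h)]
    exact le_csInf (USet_nonempty hab hh hf) (fun s hs => by linarith [key r hr s hs])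
  have step2 : ∀ r ∈ USet a b g f,
      upperRDS a b (fun t => g t + h t) f - upperRDS a b h f ≤ r :=
    fun r hr => by linarith [step1 r hr]
  have := le_csInf (USet_nonempty hab hg hf) step2
  rw [← upperRDS_eq] at this
  linarith

lemma lower_add_ge :
    lowerRDS a b g f + lowerRDS a b h f ≤ lowerRDS a b (fun t => g t + h t) f := by
  have key : ∀ r ∈ LSet a b g f, ∀ s ∈ LSet a b h f,
      r + s ≤ lowerRDS a b (fun t => g t + h t) f := by
    rintro r ⟨v1, P1, hv1, hfv1, rfl⟩ s ⟨v2, P2, hv2, hfv2, rfl⟩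
    have hv1R : IsStepOn a b v1 (merge P1 P2) := hv1.refine (merge_refines_left P1 P2)
    have hv2R : IsStepOn a b v2 (merge P1 P2) := hv2.refine (merge_refines_right P1 P2)
    have hmR : IsStepOn a b (fun t => max (v1 t) (v2 t)) (merge P1 P2) := by
      intro j hj s hs
      simp only
      rw [hv1R j hj s hs, hv2R j hj s hs]
    have h1 := stepInt_le_lower hab (hg.add hh) hf hmR
      (fun t ht => max_le (hfv1 t ht) (hfv2 t ht))
    have h2 := stepInt_add_integrator hab hg hh (merge P1 P2) hmR
    have h3 := stepInt_le_stepInt hab hg hmR hv1 (fun t _ => le_max_left (v1 t) (v2 t))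
    have h4 := stepInt_le_stepInt hab hh hmR hv2 (fun t _ => le_max_right (v1 t) (v2 t))
    linarith
  have step1 : ∀ r ∈ LSet a b g f,
      r + lowerRDS a b h f ≤ lowerRDS a b (fun t => g t + h t) f := by
    intro r hr
    have : ∀ s ∈ LSet a b h f, s ≤ lowerRDS a b (fun t => g t + h t) f - r :=
      fun s hs => by linarith [key r hr s hs]
    have := csSup_le (LSet_nonempty hab hh hf) this
    rw [← lowerRDS_eq] at this
    linarith
  have : ∀ r ∈ LSet a b g f, r ≤ lowerRDS a b (fun t => g t + h t) f - lowerRDS a b h f :=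
    fun r hr => by linarith [step1 r hr]
  have := csSup_le (LSet_nonempty hab hg hf) this
  rw [← lowerRDS_eq] at this
  linarith

lemma upper_le_upper_add_sub :
    upperRDS a b g f ≤ upperRDS a b (fun t => g t + h t) f - lowerRDS a b h f := by
  have key : ∀ r ∈ USet a b (fun t => g t + h t) f, ∀ s ∈ LSet a b h f,
      upperRDS a b g f ≤ r - s := by
    rintro r ⟨u1, P1, hu1, hfu1, rfl⟩ s ⟨v2, P2, hv2, hfv2, rfl⟩
    have h1 := upper_le_stepInt hab hg hf hu1 hfu1
    have h2 := stepInt_add_integrator hab hg hh P1 hu1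
    have h3 := stepInt_le_stepInt hab hh hu1 hv2 (fun t ht => (hfv2 t ht).trans (hfu1 t ht))
    linarith
  have step1 : ∀ r ∈ USet a b (fun t => g t + h t) f,
      upperRDS a b g f ≤ r - lowerRDS a b h f := by
    intro r hr
    have : ∀ s ∈ LSet a b h f, s ≤ r - upperRDS a b g f :=
      fun s hs => by linarith [key r hr s hs]
    have := csSup_le (LSet_nonempty hab hh hf) this
    rw [← lowerRDS_eq] at this
    linarith
  have : ∀ r ∈ USet a b (fun t => g t + h t) f,
      upperRDS a b g f + lowerRDS a b h f ≤ r :=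
    fun r hr => by linarith [step1 r hr]
  have := le_csInf (USet_nonempty hab (hg.add hh) hf) this
  rw [← upperRDS_eq] at this
  linarith

lemma lower_ge_lower_add_sub :
    lowerRDS a b (fun t => g t + h t) f - upperRDS a b h f ≤ lowerRDS a b g f := by
  have key : ∀ r ∈ LSet a b (fun t => g t + h t) f, ∀ s ∈ USet a b h f,
      r - s ≤ lowerRDS a b g f := by
    rintro r ⟨v1, P1, hv1, hfv1, rfl⟩ s ⟨u2, P2, hu2, hfu2, rfl⟩
    have h1 := stepInt_le_lower hab hg hf hv1 hfv1
    have h2 := stepInt_add_integrator hab hg hh P1 hv1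
    have h3 := stepInt_le_stepInt hab hh hu2 hv1 (fun t ht => (hfv1 t ht).trans (hfu2 t ht))
    linarith
  have step1 : ∀ r ∈ LSet a b (fun t => g t + h t) f,
      r - upperRDS a b h f ≤ lowerRDS a b g f := by
    intro r hr
    have : ∀ s ∈ USet a b h f, r - lowerRDS a b g f ≤ s :=
      fun s hs => by linarith [key r hr s hs]
    have := le_csInf (USet_nonempty hab hh hf) this
    rw [← upperRDS_eq] at this
    linarith
  have : ∀ r ∈ LSet a b (fun t => g t + h t) f,
      r ≤ lowerRDS a b g f + upperRDS a b h f :=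
    fun r hr => by linarith [step1 r hr]
  have := csSup_le (LSet_nonempty hab (hg.add hh) hf) this
  rw [← lowerRDS_eq] at this
  linarith

lemma osc_le_osc_add :
    upperRDS a b g f - lowerRDS a b g f ≤
      upperRDS a b (fun t => g t + h t) f - lowerRDS a b (fun t => g t + h t) f := by
  have key : ∀ r ∈ USet a b (fun t => g t + h t) f, ∀ s ∈ LSet a b (fun t => g t + h t) f,
      upperRDS a b g f - lowerRDS a b g f ≤ r - s := by
    rintro r ⟨u1, P1, hu1, hfu1, rfl⟩ s ⟨v1, Q1, hv1, hfv1, rfl⟩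
    have h1 := upper_le_stepInt hab hg hf hu1 hfu1
    have h2 := stepInt_le_lower hab hg hf hv1 hfv1
    have h3 := stepInt_add_integrator hab hg hh P1 hu1
    have h4 := stepInt_add_integrator hab hg hh Q1 hv1
    have h5 := stepInt_le_stepInt hab hh hu1 hv1 (fun t ht => (hfv1 t ht).trans (hfu1 t ht))
    linarith
  have step1 : ∀ r ∈ USet a b (fun t => g t + h t) f,
      upperRDS a b g f - lowerRDS a b g f ≤ r - lowerRDS a b (fun t => g t + h t) f := by
    intro r hr
    have : ∀ s ∈ LSet a b (fun t => g t + h t) f,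
        s ≤ r - (upperRDS a b g f - lowerRDS a b g f) :=
      fun s hs => by linarith [key r hr s hs]
    have := csSup_le (LSet_nonempty hab (hg.add hh) hf) this
    rw [← lowerRDS_eq] at this
    linarith
  have : ∀ r ∈ USet a b (fun t => g t + h t) f,
      upperRDS a b g f - lowerRDS a b g f + lowerRDS a b (fun t => g t + h t) f ≤ r :=
    fun r hr => by linarith [step1 r hr]
  have := le_csInf (USet_nonempty hab (hg.add hh) hf) this
  rw [← upperRDS_eq] at this
  linarith

end sums

/-- Congruence of envelopes in the integrator. -/
lemma upperRDS_congr {g2 : ℝ → ℝ} (hab : a < b) (hg : MonotoneOn g (Icc a b))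
    (hg2 : MonotoneOn g2 (Icc a b)) (hgg : EqOn g g2 (Icc a b)) (f : ℝ → ℝ) :
    upperRDS a b g f = upperRDS a b g2 f := by
  rw [upperRDS_eq, upperRDS_eq]
  congr 1
  ext r
  constructor
  · rintro ⟨u, P, hu, hfu, rfl⟩
    exact ⟨u, P, hu, hfu, stepInt_congr hab hg hg2 hgg P hu⟩
  · rintro ⟨u, P, hu, hfu, rfl⟩
    exact ⟨u, P, hu, hfu, (stepInt_congr hab hg hg2 hgg P hu).symm⟩

lemma lowerRDS_congr {g2 : ℝ → ℝ} (hab : a < b) (hg : MonotoneOn g (Icc a b))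
    (hg2 : MonotoneOn g2 (Icc a b)) (hgg : EqOn g g2 (Icc a b)) (f : ℝ → ℝ) :
    lowerRDS a b g f = lowerRDS a b g2 f := by
  rw [lowerRDS_eq, lowerRDS_eq]
  congr 1
  ext r
  constructor
  · rintro ⟨u, P, hu, hfu, rfl⟩
    exact ⟨u, P, hu, hfu, stepInt_congr hab hg hg2 hgg P hu⟩
  · rintro ⟨u, P, hu, hfu, rfl⟩
    exact ⟨u, P, hu, hfu, (stepInt_congr hab hg hg2 hgg P hu).symm⟩

end RDS14
open Set Filter Topology Function MeasureTheory

namespace RDS14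

lemma eVariationOn_add_le (F G : ℝ → ℝ) (s : Set ℝ) :
    eVariationOn (fun t => F t + G t) s ≤ eVariationOn F s + eVariationOn G s := by
  apply iSup_le
  rintro ⟨n, ⟨u, hu, us⟩⟩
  calc ∑ i ∈ Finset.range n, edist (F (u (i + 1)) + G (u (i + 1))) (F (u i) + G (u i))
      ≤ ∑ i ∈ Finset.range n,
        (edist (F (u (i + 1))) (F (u i)) + edist (G (u (i + 1))) (G (u i))) :=
        Finset.sum_le_sum (fun i _ => edist_add_add_le _ _ _ _)
    _ = (∑ i ∈ Finset.range n, edist (F (u (i + 1))) (F (u i))) +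
        ∑ i ∈ Finset.range n, edist (G (u (i + 1))) (G (u i)) := Finset.sum_add_distrib
    _ ≤ _ := add_le_add (eVariationOn.sum_le (f := F) (n := n) hu us) (eVariationOn.sum_le (f := G) (n := n) hu us)

lemma eVariationOn_sub_le (F G : ℝ → ℝ) (s : Set ℝ) :
    eVariationOn (fun t => F t - G t) s ≤ eVariationOn F s + eVariationOn G s := by
  apply iSup_le
  rintro ⟨n, ⟨u, hu, us⟩⟩
  have hstep : ∀ i, edist (F (u (i + 1)) - G (u (i + 1))) (F (u i) - G (u i)) ≤
      edist (F (u (i + 1))) (F (u i)) + edist (G (u (i + 1))) (G (u i)) := by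
    intro i
    rw [edist_dist, edist_dist, edist_dist, ← ENNReal.ofReal_add dist_nonneg dist_nonneg]
    exact ENNReal.ofReal_le_ofReal (dist_sub_sub_le _ _ _ _)
  calc ∑ i ∈ Finset.range n, edist (F (u (i + 1)) - G (u (i + 1))) (F (u i) - G (u i))
      ≤ ∑ i ∈ Finset.range n,
        (edist (F (u (i + 1))) (F (u i)) + edist (G (u (i + 1))) (G (u i))) :=
        Finset.sum_le_sum (fun i _ => hstep i)
    _ = (∑ i ∈ Finset.range n, edist (F (u (i + 1))) (F (u i))) +
        ∑ i ∈ Finset.range n, edist (G (u (i + 1))) (G (u i)) := Finset.sum_add_distrib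
    _ ≤ _ := add_le_add (eVariationOn.sum_le (f := F) (n := n) hu us) (eVariationOn.sum_le (f := G) (n := n) hu us)

lemma BoundedVariationOn.sub' {F G : ℝ → ℝ} {s : Set ℝ} (hF : BoundedVariationOn F s)
    (hG : BoundedVariationOn G s) : BoundedVariationOn (fun t => F t - G t) s := by
  rw [BoundedVariationOn]
  exact ((eVariationOn_sub_le F G s).trans_lt
    (ENNReal.add_lt_top.2 ⟨lt_top_iff_ne_top.2 hF, lt_top_iff_ne_top.2 hG⟩)).ne

lemma variationOnFromTo_le_add {F G : ℝ → ℝ} {s : Set ℝ} (hF : BoundedVariationOn F s)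
    (hG : BoundedVariationOn G s) {x y : ℝ} (hxy : x ≤ y) :
    variationOnFromTo (fun t => F t + G t) s x y ≤
      variationOnFromTo F s x y + variationOnFromTo G s x y := by
  rw [variationOnFromTo.eq_of_le _ _ hxy, variationOnFromTo.eq_of_le _ _ hxy,
    variationOnFromTo.eq_of_le _ _ hxy]
  have hF' : eVariationOn F (s ∩ Icc x y) ≠ ⊤ := hF.mono inter_subset_left
  have hG' : eVariationOn G (s ∩ Icc x y) ≠ ⊤ := hG.mono inter_subset_left
  calc (eVariationOn (fun t => F t + G t) (s ∩ Icc x y)).toReal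
      ≤ (eVariationOn F (s ∩ Icc x y) + eVariationOn G (s ∩ Icc x y)).toReal := by
        refine ENNReal.toReal_mono ?_ (eVariationOn_add_le F G _)
        exact ENNReal.add_ne_top.2 ⟨hF', hG'⟩
    _ = _ := ENNReal.toReal_add hF' hG'

end RDS14
open Set Filter Topology Function MeasureTheory

namespace RDS14

variable {a b M : ℝ} {g h f : ℝ → ℝ}

lemma variationOnFromTo_le_sub {F G : ℝ → ℝ} {s : Set ℝ} (hF : BoundedVariationOn F s)
    (hG : BoundedVariationOn G s) {x y : ℝ} (hxy : x ≤ y) :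
    variationOnFromTo (fun t => F t - G t) s x y ≤
      variationOnFromTo F s x y + variationOnFromTo G s x y := by
  rw [variationOnFromTo.eq_of_le _ _ hxy, variationOnFromTo.eq_of_le _ _ hxy,
    variationOnFromTo.eq_of_le _ _ hxy]
  have hF' : eVariationOn F (s ∩ Icc x y) ≠ ⊤ := hF.mono inter_subset_left
  have hG' : eVariationOn G (s ∩ Icc x y) ≠ ⊤ := hG.mono inter_subset_left
  calc (eVariationOn (fun t => F t - G t) (s ∩ Icc x y)).toReal
      ≤ (eVariationOn F (s ∩ Icc x y) + eVariationOn G (s ∩ Icc x y)).toReal := by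
        refine ENNReal.toReal_mono ?_ (eVariationOn_sub_le F G _)
        exact ENNReal.add_ne_top.2 ⟨hF', hG'⟩
    _ = _ := ENNReal.toReal_add hF' hG'

lemma abs_sub_le_variationOnFromTo {F : ℝ → ℝ} {s : Set ℝ} (hF : BoundedVariationOn F s)
    {x y : ℝ} (hx : x ∈ s) (hy : y ∈ s) (hxy : x ≤ y) :
    |F y - F x| ≤ variationOnFromTo F s x y := by
  rw [variationOnFromTo.eq_of_le _ _ hxy]
  have h1 : edist (F y) (F x) ≤ eVariationOn F (s ∩ Icc x y) :=
    eVariationOn.edist_le F ⟨hy, hxy, le_rfl⟩ ⟨hx, le_rfl, hxy⟩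
  have h2 := ENNReal.toReal_mono (hF.mono inter_subset_left) h1
  rw [← dist_edist, Real.dist_eq] at h2
  exact h2

section valueLemmas

variable (hab : a < b) (hg : MonotoneOn g (Icc a b)) (hh : MonotoneOn h (Icc a b))
  (hf : ∀ t ∈ Icc a b, |f t| ≤ M)

include hab hg hh hf

lemma upper_add_eq (hig : lowerRDS a b g f = upperRDS a b g f)
    (hih : lowerRDS a b h f = upperRDS a b h f) :
    upperRDS a b (fun t => g t + h t) f = upperRDS a b g f + upperRDS a b h f := by
  refine le_antisymm (upper_add_le hab hg hh hf) ?_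
  have h1 := lower_add_ge hab hg hh hf
  have h2 := lower_le_upper hab (hg.add hh) hf
  linarith

end valueLemmas

/-- The RDS integral equals `upper P - upper M` for any good decomposition. -/
lemma RDSIntegral_eq (hab : a < b) {β f P Mo : ℝ → ℝ} {M : ℝ}
    (hf : ∀ t ∈ Icc a b, |f t| ≤ M)
    (hP : MonotoneOn P (Icc a b)) (hMo : MonotoneOn Mo (Icc a b))
    (hdec : ∀ t ∈ Icc a b, β t = P t - Mo t)
    (hiP : RDSIntegrableInc a b P f) (hiM : RDSIntegrableInc a b Mo f) :
    RDSIntegral a b β f = upperRDS a b P f - upperRDS a b Mo f := by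
  have hInt : RDSIntegrable a b β f := ⟨P, Mo, hP, hMo, hdec, hiP, hiM⟩
  rw [RDSIntegral, dif_pos hInt]
  obtain ⟨hP', hM', hdec', hiP', hiM'⟩ := hInt.choose_spec.choose_spec
  set P' := hInt.choose with hP'def
  set M' := hInt.choose_spec.choose with hM'def
  have hEq : EqOn (fun t => P' t + Mo t) (fun t => P t + M' t) (Icc a b) := by
    intro t ht
    have h1 := hdec t ht
    have h2 := hdec' t ht
    simp only
    linarith
  have e1 : upperRDS a b (fun t => P' t + Mo t) f = upperRDS a b P' f + upperRDS a b Mo f :=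
    upper_add_eq hab hP' hMo hf hiP' hiM
  have e2 : upperRDS a b (fun t => P t + M' t) f = upperRDS a b P f + upperRDS a b M' f :=
    upper_add_eq hab hP hM' hf hiP hiM'
  have e3 : upperRDS a b (fun t => P' t + Mo t) f = upperRDS a b (fun t => P t + M' t) f :=
    upperRDS_congr hab (hP'.add hMo) (hP.add hM') hEq f
  show RDSIntegralInc a b P' f - RDSIntegralInc a b M' f = _
  rw [RDSIntegralInc, RDSIntegralInc]
  linarith

end RDS14
open Set Filter Topology Function MeasureTheory

namespace RDS14

variable {a b M : ℝ} {f g h g1 g2 : ℝ → ℝ}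

section midLemmas

variable (hab : a < b) (hg : MonotoneOn g (Icc a b)) (hh : MonotoneOn h (Icc a b))
  (hg1 : MonotoneOn g1 (Icc a b)) (hg2 : MonotoneOn g2 (Icc a b))
  (hf : ∀ t ∈ Icc a b, |f t| ≤ M)
  (hsum : EqOn (fun t => g t + h t) (fun t => g1 t + g2 t) (Icc a b))

include hab hg hh hg1 hg2 hf hsum

/-- Oscillation transfer across an exchange identity. -/
lemma osc_le_osc_pair :
    upperRDS a b g f - lowerRDS a b g f ≤
      (upperRDS a b g1 f - lowerRDS a b g1 f) + (upperRDS a b g2 f - lowerRDS a b g2 f) := by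
  have h1 := osc_le_osc_add hab hg hh hf
  have e1 : upperRDS a b (fun t => g t + h t) f = upperRDS a b (fun t => g1 t + g2 t) f :=
    upperRDS_congr hab (hg.add hh) (hg1.add hg2) hsum f
  have e2 : lowerRDS a b (fun t => g t + h t) f = lowerRDS a b (fun t => g1 t + g2 t) f :=
    lowerRDS_congr hab (hg.add hh) (hg1.add hg2) hsum f
  have h2 := upper_add_le hab hg1 hg2 hf
  have h3 := lower_add_ge hab hg1 hg2 hf
  linarith

lemma integrable_of_pair (hi1 : lowerRDS a b g1 f = upperRDS a b g1 f)
    (hi2 : lowerRDS a b g2 f = upperRDS a b g2 f) :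
    lowerRDS a b g f = upperRDS a b g f := by
  have h1 := osc_le_osc_pair hab hg hh hg1 hg2 hf hsum
  have h2 := lower_le_upper hab hg hf
  linarith

lemma osc_le_pair_bound (hi1 : lowerRDS a b g1 f = upperRDS a b g1 f) :
    upperRDS a b g f - lowerRDS a b g f ≤ 2 * (M * (g2 b - g2 a)) := by
  have h1 := osc_le_osc_pair hab hg hh hg1 hg2 hf hsum
  have h2 := upper_le_bound hab hg2 hf
  have h3 := bound_le_lower hab hg2 hf
  linarith

lemma upper_diff_le :
    upperRDS a b g f - upperRDS a b g1 f ≤ M * (g2 b - g2 a) + M * (h b - h a) := by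
  have h1 := upper_le_upper_add_sub hab hg hh hf
  have e1 : upperRDS a b (fun t => g t + h t) f = upperRDS a b (fun t => g1 t + g2 t) f :=
    upperRDS_congr hab (hg.add hh) (hg1.add hg2) hsum f
  have h2 := upper_add_le hab hg1 hg2 hf
  have h3 := upper_le_bound hab hg2 hf
  have h4 := bound_le_lower hab hh hf
  linarith

end midLemmas

end RDS14
open Set Filter Topology Function MeasureTheory

namespace RDS14

variable {a b M : ℝ} {f : ℝ → ℝ}

lemma eVariationOn_sub_comm (F G : ℝ → ℝ) (s : Set ℝ) :
    eVariationOn (fun t => F t - G t) s = eVariationOn (fun t => G t - F t) s := by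
  have key : ∀ x y : ℝ, edist (F x - G x) (F y - G y) = edist (G x - F x) (G y - F y) := by
    intro x y
    rw [edist_dist, edist_dist, Real.dist_eq, Real.dist_eq]
    congr 1
    rw [← abs_neg]
    congr 1
    ring
  simp only [eVariationOn]
  congr 1
  funext p
  exact Finset.sum_congr rfl (fun i _ => key _ _)

/-- Increment of the running variation. -/
lemma var_inc {β : ℝ → ℝ} (hβ : BoundedVariationOn β (Set.Icc a b)) (hab : a ≤ b)
    {x y : ℝ} (hx : x ∈ Set.Icc a b) (hy : y ∈ Set.Icc a b) :
    variationOnFromTo β (Set.Icc a b) a y - variationOnFromTo β (Set.Icc a b) a x =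
      variationOnFromTo β (Set.Icc a b) x y := by
  have := variationOnFromTo.add hβ.locallyBoundedVariationOn
    (left_mem_Icc.2 hab) hx hy
  linarith

lemma var_total {β : ℝ → ℝ} (hab : a ≤ b) :
    variationOnFromTo β (Set.Icc a b) a b = (eVariationOn β (Set.Icc a b)).toReal := by
  rw [variationOnFromTo.eq_of_le _ _ hab, Set.inter_self]

/-- monotonicity of `w + δ` where `w` is the running variation of `δ`. -/
lemma monotoneOn_var_add {δ : ℝ → ℝ} (hδ : BoundedVariationOn δ (Set.Icc a b)) (hab : a ≤ b) :
    MonotoneOn (fun t => variationOnFromTo δ (Set.Icc a b) a t + δ t) (Set.Icc a b) := by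
  intro x hx y hy hxy
  simp only
  have h1 := var_inc hδ hab hx hy
  have h2 := abs_sub_le_variationOnFromTo hδ hx hy hxy
  have h3 := abs_le.1 h2
  linarith [h3.1]

lemma monotoneOn_var_sub {δ : ℝ → ℝ} (hδ : BoundedVariationOn δ (Set.Icc a b)) (hab : a ≤ b) :
    MonotoneOn (fun t => variationOnFromTo δ (Set.Icc a b) a t - δ t) (Set.Icc a b) := by
  intro x hx y hy hxy
  simp only
  have h1 := var_inc hδ hab hx hy
  have h2 := abs_sub_le_variationOnFromTo hδ hx hy hxy
  have h3 := abs_le.1 h2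
  linarith [h3.2]

lemma monotoneOn_var {β : ℝ → ℝ} (hβ : BoundedVariationOn β (Set.Icc a b)) (hab : a ≤ b) :
    MonotoneOn (fun t => variationOnFromTo β (Set.Icc a b) a t) (Set.Icc a b) := by
  intro x hx y hy hxy
  exact variationOnFromTo.monotoneOn hβ.locallyBoundedVariationOn
    (left_mem_Icc.2 hab) hx hy hxy

/-- If `f` is RDS-integrable w.r.t. `β` for some decomposition, it is integrable w.r.t. the
canonical (variation) decomposition. -/
lemma canonical_integrable (hab : a < b) {β : ℝ → ℝ}
    (hβ : BoundedVariationOn β (Set.Icc a b))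
    (hf : ∀ t ∈ Set.Icc a b, |f t| ≤ M) (hint : RDSIntegrable a b β f) :
    (lowerRDS a b (fun t => variationOnFromTo β (Set.Icc a b) a t) f =
      upperRDS a b (fun t => variationOnFromTo β (Set.Icc a b) a t) f) ∧
    (lowerRDS a b (fun t => variationOnFromTo β (Set.Icc a b) a t - β t) f =
      upperRDS a b (fun t => variationOnFromTo β (Set.Icc a b) a t - β t) f) := by
  obtain ⟨p', m', hp', hm', hdec', hip', him'⟩ := hint
  have hvβ := monotoneOn_var hβ hab.le
  have hMβ := monotoneOn_var_sub hβ hab.le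
  -- the slack is monotone
  have hslack : MonotoneOn (fun t => p' t + m' t - variationOnFromTo β (Set.Icc a b) a t)
      (Set.Icc a b) := by
    intro x hx y hy hxy
    simp only
    have h1 := var_inc hβ hab.le hx hy
    have h2 : variationOnFromTo β (Set.Icc a b) x y ≤ (p' y - p' x) + (m' y - m' x) := by
      rw [variationOnFromTo.eq_of_le _ _ hxy]
      have e1 : eVariationOn β (Set.Icc a b ∩ Set.Icc x y) =
          eVariationOn (fun t => p' t - m' t) (Set.Icc a b ∩ Set.Icc x y) :=
        eVariationOn.eq_of_eqOn (fun t ht => hdec' t ht.1)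
      have e2 := eVariationOn_sub_le p' m' (Set.Icc a b ∩ Set.Icc x y)
      have e3 := hp'.eVariationOn_le hx hy
      have e4 := hm'.eVariationOn_le hx hy
      have e5 : eVariationOn β (Set.Icc a b ∩ Set.Icc x y) ≤
          ENNReal.ofReal (p' y - p' x) + ENNReal.ofReal (m' y - m' x) := by
        rw [e1]; exact e2.trans (add_le_add e3 e4)
      have e6 := ENNReal.toReal_mono
        (ENNReal.add_ne_top.2 ⟨ENNReal.ofReal_ne_top, ENNReal.ofReal_ne_top⟩) e5
      rw [ENNReal.toReal_add ENNReal.ofReal_ne_top ENNReal.ofReal_ne_top,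
        ENNReal.toReal_ofReal (sub_nonneg.2 (hp' hx hy hxy)),
        ENNReal.toReal_ofReal (sub_nonneg.2 (hm' hx hy hxy))] at e6
      exact e6
    linarith
  constructor
  · refine integrable_of_pair hab hvβ hslack hp' hm' hf ?_ hip' him'
    intro t _
    simp only
    ring
  · refine integrable_of_pair hab hMβ hslack hm' hm' hf ?_ him' him'
    intro t ht
    simp only
    have := hdec' t ht
    linarith

/-- Quantitative comparison of canonical decompositions of two BV functions. -/
lemma canonical_compare (hab : a < b) {β γ : ℝ → ℝ} (hM0 : 0 ≤ M)
    (hβ : BoundedVariationOn β (Set.Icc a b)) (hγ : BoundedVariationOn γ (Set.Icc a b))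
    (hf : ∀ t ∈ Set.Icc a b, |f t| ≤ M) :
    (upperRDS a b (fun t => variationOnFromTo β (Set.Icc a b) a t) f -
        lowerRDS a b (fun t => variationOnFromTo β (Set.Icc a b) a t) f ≤
      (upperRDS a b (fun t => variationOnFromTo γ (Set.Icc a b) a t) f -
        lowerRDS a b (fun t => variationOnFromTo γ (Set.Icc a b) a t) f) +
      4 * M * (eVariationOn (fun t => β t - γ t) (Set.Icc a b)).toReal) ∧
    (upperRDS a b (fun t => variationOnFromTo β (Set.Icc a b) a t) f -
        upperRDS a b (fun t => variationOnFromTo γ (Set.Icc a b) a t) f ≤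
      3 * M * (eVariationOn (fun t => β t - γ t) (Set.Icc a b)).toReal) ∧
    (upperRDS a b (fun t => variationOnFromTo β (Set.Icc a b) a t - β t) f -
        lowerRDS a b (fun t => variationOnFromTo β (Set.Icc a b) a t - β t) f ≤
      (upperRDS a b (fun t => variationOnFromTo γ (Set.Icc a b) a t - γ t) f -
        lowerRDS a b (fun t => variationOnFromTo γ (Set.Icc a b) a t - γ t) f) +
      6 * M * (eVariationOn (fun t => β t - γ t) (Set.Icc a b)).toReal) ∧
    (upperRDS a b (fun t => variationOnFromTo β (Set.Icc a b) a t - β t) f -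
        upperRDS a b (fun t => variationOnFromTo γ (Set.Icc a b) a t - γ t) f ≤
      6 * M * (eVariationOn (fun t => β t - γ t) (Set.Icc a b)).toReal) := by
  have ha : a ∈ Set.Icc a b := left_mem_Icc.2 hab.le
  have hb : b ∈ Set.Icc a b := right_mem_Icc.2 hab.le
  set V := (eVariationOn (fun t => β t - γ t) (Set.Icc a b)).toReal with hV_def
  have hδ : BoundedVariationOn (fun t => β t - γ t) (Set.Icc a b) :=
    BoundedVariationOn.sub' hβ hγ
  have hV0 : 0 ≤ V := ENNReal.toReal_nonneg
  -- abbreviations via haves of monotonicity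
  have hvβ := monotoneOn_var hβ hab.le
  have hvγ := monotoneOn_var hγ hab.le
  have hw := monotoneOn_var hδ hab.le
  have hMβ := monotoneOn_var_sub hβ hab.le
  have hMγ := monotoneOn_var_sub hγ hab.le
  have hq := monotoneOn_var_add hδ hab.le
  -- r := vβ - vγ + w is monotone
  have hr : MonotoneOn (fun t => variationOnFromTo β (Set.Icc a b) a t -
      variationOnFromTo γ (Set.Icc a b) a t +
      variationOnFromTo (fun t => β t - γ t) (Set.Icc a b) a t) (Set.Icc a b) := by
    intro x hx y hy hxy
    simp only
    have h1 := var_inc hβ hab.le hx hy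
    have h2 := var_inc hγ hab.le hx hy
    have h3 := var_inc hδ hab.le hx hy
    have h4 : variationOnFromTo γ (Set.Icc a b) x y ≤
        variationOnFromTo β (Set.Icc a b) x y +
        variationOnFromTo (fun t => β t - γ t) (Set.Icc a b) x y := by
      have e0 : γ = fun t => β t - (β t - γ t) := by funext t; ring
      calc variationOnFromTo γ (Set.Icc a b) x y
          = variationOnFromTo (fun t => β t - (β t - γ t)) (Set.Icc a b) x y := by rw [← e0]
        _ ≤ _ := variationOnFromTo_le_sub hβ hδ hxy
    linarith
  -- total variation facts
  have hwb : variationOnFromTo (fun t => β t - γ t) (Set.Icc a b) a b = V :=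
    var_total hab.le
  have hwa : variationOnFromTo (fun t => β t - γ t) (Set.Icc a b) a a = 0 :=
    variationOnFromTo.self _ _ _
  have hvβa : variationOnFromTo β (Set.Icc a b) a a = 0 := variationOnFromTo.self _ _ _
  have hvγa : variationOnFromTo γ (Set.Icc a b) a a = 0 := variationOnFromTo.self _ _ _
  have hvbb : variationOnFromTo β (Set.Icc a b) a b ≤
      variationOnFromTo γ (Set.Icc a b) a b + V := by
    have e0 : β = fun t => γ t + (β t - γ t) := by funext t; ring
    calc variationOnFromTo β (Set.Icc a b) a b
        = variationOnFromTo (fun t => γ t + (β t - γ t)) (Set.Icc a b) a b := by rw [← e0]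
      _ ≤ _ := by
          have := variationOnFromTo_le_add hγ hδ (s := Set.Icc a b) hab.le
          rw [hwb] at this
          exact this
  have hδb : |(fun t => β t - γ t) b - (fun t => β t - γ t) a| ≤ V := by
    have := abs_sub_le_variationOnFromTo hδ ha hb hab.le
    rwa [hwb] at this
  -- key sum identity 1 : vβ + w = vγ + r  (global)
  have hsum1 : EqOn (fun t => variationOnFromTo β (Set.Icc a b) a t +
      variationOnFromTo (fun t => β t - γ t) (Set.Icc a b) a t)
      (fun t => variationOnFromTo γ (Set.Icc a b) a t +
        (variationOnFromTo β (Set.Icc a b) a t - variationOnFromTo γ (Set.Icc a b) a t +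
          variationOnFromTo (fun t => β t - γ t) (Set.Icc a b) a t)) (Set.Icc a b) := by
    intro t _
    simp only
    ring
  -- r increment over [a,b]
  have hrbound : (variationOnFromTo β (Set.Icc a b) a b -
      variationOnFromTo γ (Set.Icc a b) a b +
      variationOnFromTo (fun t => β t - γ t) (Set.Icc a b) a b) -
      (variationOnFromTo β (Set.Icc a b) a a -
      variationOnFromTo γ (Set.Icc a b) a a +
      variationOnFromTo (fun t => β t - γ t) (Set.Icc a b) a a) ≤ 2 * V := by
    rw [hwa, hwb, hvβa, hvγa]
    linarith
  have hwbound : variationOnFromTo (fun t => β t - γ t) (Set.Icc a b) a b -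
      variationOnFromTo (fun t => β t - γ t) (Set.Icc a b) a a ≤ V := by
    rw [hwa, hwb]; linarith
  -- (1)
  have out1 : upperRDS a b (fun t => variationOnFromTo β (Set.Icc a b) a t) f -
      lowerRDS a b (fun t => variationOnFromTo β (Set.Icc a b) a t) f ≤
      (upperRDS a b (fun t => variationOnFromTo γ (Set.Icc a b) a t) f -
        lowerRDS a b (fun t => variationOnFromTo γ (Set.Icc a b) a t) f) + 4 * M * V := by
    have h1 := osc_le_osc_pair hab hvβ hw hvγ hr hf hsum1
    have h2 := upper_le_bound hab hr hf
    have h3 := bound_le_lower hab hr hf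
    have h4 : M * ((variationOnFromTo β (Set.Icc a b) a b -
        variationOnFromTo γ (Set.Icc a b) a b +
        variationOnFromTo (fun t => β t - γ t) (Set.Icc a b) a b) -
        (variationOnFromTo β (Set.Icc a b) a a -
        variationOnFromTo γ (Set.Icc a b) a a +
        variationOnFromTo (fun t => β t - γ t) (Set.Icc a b) a a)) ≤ M * (2 * V) :=
      mul_le_mul_of_nonneg_left hrbound hM0
    nlinarith [h1, h2, h3, h4]
  -- (2)
  have out2 : upperRDS a b (fun t => variationOnFromTo β (Set.Icc a b) a t) f -
      upperRDS a b (fun t => variationOnFromTo γ (Set.Icc a b) a t) f ≤ 3 * M * V := by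
    have h1 := upper_diff_le hab hvβ hw hvγ hr hf hsum1
    have h4 : M * ((variationOnFromTo β (Set.Icc a b) a b -
        variationOnFromTo γ (Set.Icc a b) a b +
        variationOnFromTo (fun t => β t - γ t) (Set.Icc a b) a b) -
        (variationOnFromTo β (Set.Icc a b) a a -
        variationOnFromTo γ (Set.Icc a b) a a +
        variationOnFromTo (fun t => β t - γ t) (Set.Icc a b) a a)) ≤ M * (2 * V) :=
      mul_le_mul_of_nonneg_left hrbound hM0
    have h5 : M * (variationOnFromTo (fun t => β t - γ t) (Set.Icc a b) a b -
        variationOnFromTo (fun t => β t - γ t) (Set.Icc a b) a a) ≤ M * V :=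
      mul_le_mul_of_nonneg_left hwbound hM0
    -- h1 : upper vβ - upper vγ ≤ M * (r b - r a) + M * (w b - w a)
    nlinarith [h1, h4, h5]
  -- M-side : s' := fun t => w t + (w t + δ t), r' := fun t => r t + w t
  have hs' : MonotoneOn (fun t => variationOnFromTo (fun t => β t - γ t) (Set.Icc a b) a t +
      (variationOnFromTo (fun t => β t - γ t) (Set.Icc a b) a t + (β t - γ t)))
      (Set.Icc a b) := by
    intro x hx y hy hxy
    have := hq hx hy hxy
    have := hw hx hy hxy
    simp only at *
    linarith
  have hr' : MonotoneOn (fun t => (variationOnFromTo β (Set.Icc a b) a t -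
      variationOnFromTo γ (Set.Icc a b) a t +
      variationOnFromTo (fun t => β t - γ t) (Set.Icc a b) a t) +
      variationOnFromTo (fun t => β t - γ t) (Set.Icc a b) a t) (Set.Icc a b) := by
    intro x hx y hy hxy
    have := hr hx hy hxy
    have := hw hx hy hxy
    simp only at *
    linarith
  have hsum2 : EqOn (fun t => (variationOnFromTo β (Set.Icc a b) a t - β t) +
      (variationOnFromTo (fun t => β t - γ t) (Set.Icc a b) a t +
        (variationOnFromTo (fun t => β t - γ t) (Set.Icc a b) a t + (β t - γ t))))
      (fun t => (variationOnFromTo γ (Set.Icc a b) a t - γ t) +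
        ((variationOnFromTo β (Set.Icc a b) a t - variationOnFromTo γ (Set.Icc a b) a t +
          variationOnFromTo (fun t => β t - γ t) (Set.Icc a b) a t) +
          variationOnFromTo (fun t => β t - γ t) (Set.Icc a b) a t)) (Set.Icc a b) := by
    intro t _
    simp only
    ring
  have hs'bound : (variationOnFromTo (fun t => β t - γ t) (Set.Icc a b) a b +
      (variationOnFromTo (fun t => β t - γ t) (Set.Icc a b) a b + (β b - γ b))) -
      (variationOnFromTo (fun t => β t - γ t) (Set.Icc a b) a a +
      (variationOnFromTo (fun t => β t - γ t) (Set.Icc a b) a a + (β a - γ a))) ≤ 3 * V := by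
    rw [hwa, hwb]
    simp only at hδb
    have := abs_le.1 hδb
    linarith [this.2]
  have hr'bound : ((variationOnFromTo β (Set.Icc a b) a b -
      variationOnFromTo γ (Set.Icc a b) a b +
      variationOnFromTo (fun t => β t - γ t) (Set.Icc a b) a b) +
      variationOnFromTo (fun t => β t - γ t) (Set.Icc a b) a b) -
      ((variationOnFromTo β (Set.Icc a b) a a -
      variationOnFromTo γ (Set.Icc a b) a a +
      variationOnFromTo (fun t => β t - γ t) (Set.Icc a b) a a) +
      variationOnFromTo (fun t => β t - γ t) (Set.Icc a b) a a) ≤ 3 * V := by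
    rw [hwa, hwb, hvβa, hvγa]
    linarith
  have out3 : upperRDS a b (fun t => variationOnFromTo β (Set.Icc a b) a t - β t) f -
      lowerRDS a b (fun t => variationOnFromTo β (Set.Icc a b) a t - β t) f ≤
      (upperRDS a b (fun t => variationOnFromTo γ (Set.Icc a b) a t - γ t) f -
        lowerRDS a b (fun t => variationOnFromTo γ (Set.Icc a b) a t - γ t) f) + 6 * M * V := by
    have h1 := osc_le_osc_pair hab hMβ hs' hMγ hr' hf hsum2
    have h2 := upper_le_bound hab hr' hf
    have h3 := bound_le_lower hab hr' hf
    have h4 := mul_le_mul_of_nonneg_left hr'bound hM0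
    nlinarith [h1, h2, h3, h4]
  have out4 : upperRDS a b (fun t => variationOnFromTo β (Set.Icc a b) a t - β t) f -
      upperRDS a b (fun t => variationOnFromTo γ (Set.Icc a b) a t - γ t) f ≤ 6 * M * V := by
    have h1 := upper_diff_le hab hMβ hs' hMγ hr' hf hsum2
    have h4 := mul_le_mul_of_nonneg_left hr'bound hM0
    have h5 := mul_le_mul_of_nonneg_left hs'bound hM0
    nlinarith [h1, h4, h5]
  exact ⟨out1, out2, out3, out4⟩

end RDS14
open RDS14 in
theorem stmt14 (a b : ℝ) (hab : a < b) (A : ℕ → ℝ → ℝ) (α f : ℝ → ℝ)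
    (hA : ∀ k, BoundedVariationOn (A k) (Set.Icc a b))
    (hα : BoundedVariationOn α (Set.Icc a b))
    (hconv : Tendsto (fun k => BVnorm a b (fun t => A k t - α t)) atTop (𝓝 0))
    (hf : BddOn a b f) (hfi : ∀ k, RDSIntegrable a b (A k) f) :
    RDSIntegrable a b α f ∧
    Tendsto (fun k => RDSIntegral a b (A k) f) atTop (𝓝 (RDSIntegral a b α f)) := by
  classical
  obtain ⟨M0, hM0'⟩ := hf
  set M : ℝ := max M0 0 with hM_def
  have hM : ∀ t ∈ Set.Icc a b, |f t| ≤ M := fun t ht => (hM0' t ht).trans (le_max_left _ _)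
  have hM0 : 0 ≤ M := le_max_right _ _
  have ha : a ∈ Set.Icc a b := Set.left_mem_Icc.2 hab.le
  have hb : b ∈ Set.Icc a b := Set.right_mem_Icc.2 hab.le
  set V : ℕ → ℝ := fun k => (eVariationOn (fun t => A k t - α t) (Set.Icc a b)).toReal
    with hV_def
  have hDk : ∀ k, BoundedVariationOn (fun t => A k t - α t) (Set.Icc a b) :=
    fun k => BoundedVariationOn.sub' (hA k) hα
  -- V k → 0
  have hVconv : Tendsto V atTop (𝓝 0) := by
    refine squeeze_zero (fun k => ENNReal.toReal_nonneg) (fun k => ?_) hconv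
    have key : ∀ t ∈ Set.Icc a b, |A k t - α t| ≤
        |A k a - α a| + (eVariationOn (fun t => A k t - α t) (Set.Icc a b)).toReal := by
      intro t ht
      have h1 := abs_sub_le_variationOnFromTo (hDk k) ha ht ht.1
      have h2 : variationOnFromTo (fun t => A k t - α t) (Set.Icc a b) a t ≤
          variationOnFromTo (fun t => A k t - α t) (Set.Icc a b) a b :=
        monotoneOn_var (hDk k) hab.le ht hb ht.2
      rw [var_total hab.le] at h2
      have h3 : |A k t - α t| ≤ |A k a - α a| + |A k t - α t - (A k a - α a)| := by
        have := abs_add_le (A k a - α a) (A k t - α t - (A k a - α a))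
        simpa using this
      linarith
    have hbdd : BddAbove ((fun t => |A k t - α t|) '' Set.Icc a b) := by
      refine ⟨|A k a - α a| + (eVariationOn (fun t => A k t - α t) (Set.Icc a b)).toReal, ?_⟩
      rintro r ⟨t, ht, rfl⟩
      exact key t ht
    have hmem : |A k a - α a| ∈ (fun t => |A k t - α t|) '' Set.Icc a b := ⟨a, ha, rfl⟩
    have h5 := le_csSup hbdd hmem
    have h6 : (0 : ℝ) ≤ sSup ((fun t => |A k t - α t|) '' Set.Icc a b) :=
      le_trans (abs_nonneg _) h5
    show (eVariationOn (fun t => A k t - α t) (Set.Icc a b)).toReal ≤ _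
    rw [BVnorm]
    linarith
  -- canonical decompositions of each `A k` are integrable
  have hAcan := fun k => canonical_integrable hab (hA k) hM (hfi k)
  -- comparisons
  have hcomp1 := fun k => canonical_compare (f := f) hab hM0 hα (hA k) hM
  have hcomp2 := fun k => canonical_compare (f := f) hab hM0 (hA k) hα hM
  have hVk : ∀ k, V k = (eVariationOn (fun t => A k t - α t) (Set.Icc a b)).toReal :=
    fun k => rfl
  have hsymm : ∀ k, (eVariationOn (fun t => α t - A k t) (Set.Icc a b)).toReal = V k := by
    intro k
    rw [hVk k, eVariationOn_sub_comm]
  -- monotone pieces for α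
  have hvα := monotoneOn_var hα hab.le
  have hMα := monotoneOn_var_sub hα hab.le
  -- oscillation of the canonical pieces of α vanishes
  have hPa : lowerRDS a b (fun t => variationOnFromTo α (Set.Icc a b) a t) f =
      upperRDS a b (fun t => variationOnFromTo α (Set.Icc a b) a t) f := by
    have hle : ∀ k, upperRDS a b (fun t => variationOnFromTo α (Set.Icc a b) a t) f -
        lowerRDS a b (fun t => variationOnFromTo α (Set.Icc a b) a t) f ≤ 4 * M * V k := by
      intro k
      have h1 := (hcomp1 k).1
      rw [hsymm k] at h1
      have h2 := (hAcan k).1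
      linarith
    have htend : Tendsto (fun k => 4 * M * V k) atTop (𝓝 0) := by
      have := hVconv.const_mul (4 * M)
      simpa using this
    have h0 := ge_of_tendsto' htend hle
    have h2 := lower_le_upper hab hvα hM
    linarith
  have hMa : lowerRDS a b (fun t => variationOnFromTo α (Set.Icc a b) a t - α t) f =
      upperRDS a b (fun t => variationOnFromTo α (Set.Icc a b) a t - α t) f := by
    have hle : ∀ k, upperRDS a b (fun t => variationOnFromTo α (Set.Icc a b) a t - α t) f -
        lowerRDS a b (fun t => variationOnFromTo α (Set.Icc a b) a t - α t) f ≤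
        6 * M * V k := by
      intro k
      have h1 := (hcomp1 k).2.2.1
      rw [hsymm k] at h1
      have h2 := (hAcan k).2
      linarith
    have htend : Tendsto (fun k => 6 * M * V k) atTop (𝓝 0) := by
      have := hVconv.const_mul (6 * M)
      simpa using this
    have h0 := ge_of_tendsto' htend hle
    have h2 := lower_le_upper hab hMα hM
    linarith
  have hint : RDSIntegrable a b α f :=
    ⟨fun t => variationOnFromTo α (Set.Icc a b) a t,
     fun t => variationOnFromTo α (Set.Icc a b) a t - α t,
     hvα, hMα, fun t _ => by ring, hPa, hMa⟩
  refine ⟨hint, ?_⟩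
  -- values of the integrals
  have hIα : RDSIntegral a b α f =
      upperRDS a b (fun t => variationOnFromTo α (Set.Icc a b) a t) f -
      upperRDS a b (fun t => variationOnFromTo α (Set.Icc a b) a t - α t) f :=
    RDSIntegral_eq hab hM hvα hMα (fun t _ => by ring) hPa hMa
  have hIk : ∀ k, RDSIntegral a b (A k) f =
      upperRDS a b (fun t => variationOnFromTo (A k) (Set.Icc a b) a t) f -
      upperRDS a b (fun t => variationOnFromTo (A k) (Set.Icc a b) a t - A k t) f :=
    fun k => RDSIntegral_eq hab hM (monotoneOn_var (hA k) hab.le)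
      (monotoneOn_var_sub (hA k) hab.le) (fun t _ => by ring) (hAcan k).1 (hAcan k).2
  have hbound : ∀ k, |RDSIntegral a b (A k) f - RDSIntegral a b α f| ≤ 9 * M * V k := by
    intro k
    rw [hIk k, hIα]
    have d1 := (hcomp1 k).2.1
    have d2 := (hcomp2 k).2.1
    have d3 := (hcomp1 k).2.2.2
    have d4 := (hcomp2 k).2.2.2
    rw [hsymm k] at d1 d3
    rw [← hVk k] at d2 d4
    rw [abs_le]
    constructor <;> [skip; skip] <;> [linarith [d2, d3]; linarith [d1, d4]]
  have h9 : Tendsto (fun k => 9 * M * V k) atTop (𝓝 0) := by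
    have := hVconv.const_mul (9 * M)
    simpa using this
  have hzero : Tendsto (fun k => RDSIntegral a b (A k) f - RDSIntegral a b α f) atTop (𝓝 0) :=
    squeeze_zero_norm (fun k => by
      rw [Real.norm_eq_abs]; exact hbound k) h9
  exact tendsto_sub_nhds_zero_iff.1 hzero
end

section
/- Every continuous function f on [a,b] is RDS integrable with respect to every α of bounded variation on [a,b]. -/
open Set Filter Topology
open scoped Classical

noncomputable section RDSaux

open MeasureTheory Function

/-! ### RDSPartition lemmas -/

variable {a b : ℝ}

lemma part_lt (P : RDSPartition a b) {i j : ℕ} (hij : i < j) (hj : j ≤ P.n) : P.x i < P.x j := by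
  induction j with
  | zero => omega
  | succ k ih =>
    have hk : k < P.n := hj
    rcases Nat.lt_or_ge i k with h | h
    · exact (ih h hk.le).trans (P.mono k hk)
    · have : i = k := by omega
      subst this; exact P.mono i hk

lemma part_le (P : RDSPartition a b) {i j : ℕ} (hij : i ≤ j) (hj : j ≤ P.n) : P.x i ≤ P.x j := by
  rcases eq_or_lt_of_le hij with rfl | h
  · exact le_refl _
  · exact (part_lt P h hj).le

lemma part_mem (P : RDSPartition a b) {i : ℕ} (hi : i ≤ P.n) : P.x i ∈ Set.Icc a b := by
  constructor
  · have h := part_le P (Nat.zero_le i) hi; rwa [P.first] at h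
  · have h := part_le P hi le_rfl; rwa [P.last] at h

lemma part_Ioo_subset (P : RDSPartition a b) {i : ℕ} (hi : i < P.n) :
    Set.Ioo (P.x i) (P.x (i + 1)) ⊆ Set.Icc a b := by
  intro t ht
  have h1 : a ≤ P.x i := by
    have h := part_le P (Nat.zero_le i) hi.le; rwa [P.first] at h
  have h2 : P.x (i + 1) ≤ b := by
    have h := part_le P hi le_rfl; rwa [P.last] at h
  exact ⟨h1.trans ht.1.le, ht.2.le.trans h2⟩

lemma part_Ioo_unique (P : RDSPartition a b) {i j : ℕ} (hi : i < P.n) (hj : j < P.n) {t : ℝ}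
    (hti : t ∈ Set.Ioo (P.x i) (P.x (i + 1))) (htj : t ∈ Set.Ioo (P.x j) (P.x (j + 1))) :
    i = j := by
  by_contra hne
  rcases Nat.lt_or_ge i j with h | h
  · have : P.x (i + 1) ≤ P.x j := part_le P h hj.le
    linarith [hti.2, htj.1]
  · have hji : j < i := by omega
    have : P.x (j + 1) ≤ P.x i := part_le P hji hi.le
    linarith [hti.1, htj.2]

lemma part_node_not_mem (P : RDSPartition a b) {i j : ℕ} (hi : i < P.n) (hj : j ≤ P.n) :
    P.x j ∉ Set.Ioo (P.x i) (P.x (i + 1)) := by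
  rintro ⟨h1, h2⟩
  have hij : i < j := by
    by_contra h
    exact absurd (part_le P (not_lt.1 h) hi.le) (not_le.2 h1)
  have : j < i + 1 := by
    by_contra h
    exact absurd (part_le P (not_lt.1 h) hj) (not_le.2 h2)
  omega

lemma part_cases (P : RDSPartition a b) {t : ℝ} (ht : t ∈ Set.Icc a b) :
    (∃ j, j ≤ P.n ∧ t = P.x j) ∨ ∃ i, i < P.n ∧ t ∈ Set.Ioo (P.x i) (P.x (i + 1)) := by
  classical
  set k := Nat.findGreatest (fun i => P.x i ≤ t) P.n with hk
  have hk_le : k ≤ P.n := Nat.findGreatest_le _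
  have hkx : P.x k ≤ t :=
    Nat.findGreatest_spec (P := fun i => P.x i ≤ t) (m := 0) (Nat.zero_le P.n)
      (show P.x 0 ≤ t by rw [P.first]; exact ht.1)
  rcases eq_or_lt_of_le hkx with he | hlt
  · exact Or.inl ⟨k, hk_le, he.symm⟩
  · have hkn : k < P.n := by
      rcases eq_or_lt_of_le hk_le with he | h
      · exfalso
        have : P.x k = b := by rw [he, P.last]
        rw [this] at hlt
        exact absurd ht.2 (not_le.2 hlt)
      · exact h
    have hng : ¬ (P.x (k + 1) ≤ t) :=
      Nat.findGreatest_is_greatest (Nat.lt_succ_self k) hkn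
    exact Or.inr ⟨k, hkn, hlt, not_le.1 hng⟩

/-! ### Step approximation -/

def stepApprox (a b : ℝ) (P : RDSPartition a b) (f : ℝ → ℝ) (ε : ℝ) : ℝ → ℝ := fun t =>
  if h : ∃ i, i < P.n ∧ t ∈ Set.Ioo (P.x i) (P.x (i + 1)) then
    f ((P.x h.choose + P.x (h.choose + 1)) / 2) + ε
  else f t

lemma stepApprox_of_mem (P : RDSPartition a b) (f : ℝ → ℝ) (ε : ℝ) {i : ℕ} (hi : i < P.n)
    {t : ℝ} (ht : t ∈ Set.Ioo (P.x i) (P.x (i + 1))) :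
    stepApprox a b P f ε t = f ((P.x i + P.x (i + 1)) / 2) + ε := by
  have hex : ∃ i, i < P.n ∧ t ∈ Set.Ioo (P.x i) (P.x (i + 1)) := ⟨i, hi, ht⟩
  have hspec := hex.choose_spec
  have heq : hex.choose = i := part_Ioo_unique P hspec.1 hi hspec.2 ht
  rw [stepApprox]
  rw [dif_pos hex, heq]

lemma stepApprox_of_node (P : RDSPartition a b) (f : ℝ → ℝ) (ε : ℝ) {j : ℕ} (hj : j ≤ P.n) :
    stepApprox a b P f ε (P.x j) = f (P.x j) := by
  rw [stepApprox, dif_neg]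
  rintro ⟨i, hi, hmem⟩
  exact part_node_not_mem P hi hj hmem

lemma isStepOn_stepApprox (P : RDSPartition a b) (f : ℝ → ℝ) (ε : ℝ) :
    IsStepOn a b (stepApprox a b P f ε) P := by
  intro i hi s hs
  have hmid : (P.x i + P.x (i + 1)) / 2 ∈ Set.Ioo (P.x i) (P.x (i + 1)) := by
    constructor <;> · have := P.mono i hi; linarith
  rw [stepApprox_of_mem P f ε hi hs, stepApprox_of_mem P f ε hi hmid]

/-! ### Monotone-clamped integrator: measure computations -/

variable {α : ℝ → ℝ}

lemma mono_leftLim_rightLim (hm : Monotone α) (t : ℝ) :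
    leftLim (rightLim α) t = leftLim α t := by
  have hg : Monotone (rightLim α) := hm.rightLim
  have hne : (𝓝[<] t) ≠ ⊥ := (nhdsLT_neBot t).ne
  apply le_antisymm
  · rw [hg.leftLim_eq_sSup]
    apply csSup_le (Set.nonempty_Iio.image _)
    rintro _ ⟨y, hy, rfl⟩
    exact hm.rightLim_le_leftLim hy
  · rw [hm.leftLim_eq_sSup]
    apply csSup_le (Set.nonempty_Iio.image _)
    rintro _ ⟨y, hy, rfl⟩
    exact (hm.le_rightLim le_rfl).trans (hg.le_leftLim hy)

lemma rLim_eq_rightLim (hrb : ∀ t, b ≤ t → α t = α b) {t : ℝ} (ht : t ≤ b) :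
    rLim b α t = rightLim α t := by
  rcases lt_or_eq_of_le ht with h | h
  · rw [rLim, if_pos h]
  · rw [h, rLim, if_neg (lt_irrefl _)]
    symm
    apply rightLim_eq_of_tendsto
    have hev : ∀ᶠ x in 𝓝[>] b, α x = α b :=
      eventually_nhdsWithin_of_forall (fun x hx => hrb x (le_of_lt hx))
    exact Tendsto.congr' (Filter.EventuallyEq.symm hev) tendsto_const_nhds

lemma lLim_eq_leftLim (hla : ∀ t, t ≤ a → α t = α a) {t : ℝ} (ht : a ≤ t) :
    lLim a α t = leftLim α t := by
  rcases lt_or_eq_of_le ht with h | h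
  · rw [lLim, if_pos h]
  · rw [← h, lLim, if_neg (lt_irrefl _)]
    symm
    apply leftLim_eq_of_tendsto
    have hev : ∀ᶠ x in 𝓝[<] a, α x = α a :=
      eventually_nhdsWithin_of_forall (fun x hx => hla x (le_of_lt hx))
    exact Tendsto.congr' (Filter.EventuallyEq.symm hev) tendsto_const_nhds

set_option linter.unusedSectionVars false
section Meas

variable (hm : Monotone α) (hla : ∀ t, t ≤ a → α t = α a) (hrb : ∀ t, b ≤ t → α t = α b)
include hm hla hrb

lemma muPt_eq {t : ℝ} (ht : t ∈ Set.Icc a b) :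
    muPt a b α t = rightLim α t - leftLim α t := by
  rw [muPt, rLim_eq_rightLim hrb ht.2, lLim_eq_leftLim hla ht.1]

lemma muPt_nonneg {t : ℝ} (ht : t ∈ Set.Icc a b) : 0 ≤ muPt a b α t := by
  rw [muPt_eq hm hla hrb ht]
  have h1 := hm.leftLim_le (le_refl t)
  have h2 := hm.le_rightLim (le_refl t)
  linarith

lemma meas_singleton {t : ℝ} (ht : t ∈ Set.Icc a b) :
    hm.stieltjesFunction.measure {t} = ENNReal.ofReal (muPt a b α t) := by
  have hF : ⇑hm.stieltjesFunction = rightLim α := funext hm.stieltjesFunction_eq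
  rw [StieltjesFunction.measure_singleton, hF, mono_leftLim_rightLim hm,
    muPt_eq hm hla hrb ht]

lemma meas_singleton_toReal {t : ℝ} (ht : t ∈ Set.Icc a b) :
    (hm.stieltjesFunction.measure {t}).toReal = muPt a b α t := by
  rw [meas_singleton hm hla hrb ht, ENNReal.toReal_ofReal (muPt_nonneg hm hla hrb ht)]

lemma muIoo_eq {c d : ℝ} (hc : c ∈ Set.Icc a b) (hd : d ∈ Set.Icc a b) :
    muIoo a b α c d = leftLim α d - rightLim α c := by
  rw [muIoo, rLim_eq_rightLim hrb hc.2, lLim_eq_leftLim hla hd.1]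

lemma muIoo_nonneg {c d : ℝ} (hc : c ∈ Set.Icc a b) (hd : d ∈ Set.Icc a b) (hcd : c < d) :
    0 ≤ muIoo a b α c d := by
  rw [muIoo_eq hm hla hrb hc hd]
  linarith [hm.rightLim_le_leftLim hcd]

lemma meas_Ioo {c d : ℝ} (hc : c ∈ Set.Icc a b) (hd : d ∈ Set.Icc a b) :
    hm.stieltjesFunction.measure (Set.Ioo c d) = ENNReal.ofReal (muIoo a b α c d) := by
  have hF : ⇑hm.stieltjesFunction = rightLim α := funext hm.stieltjesFunction_eq
  rw [StieltjesFunction.measure_Ioo, hF, mono_leftLim_rightLim hm, muIoo_eq hm hla hrb hc hd]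

lemma meas_Ioo_toReal {c d : ℝ} (hc : c ∈ Set.Icc a b) (hd : d ∈ Set.Icc a b) (hcd : c < d) :
    (hm.stieltjesFunction.measure (Set.Ioo c d)).toReal = muIoo a b α c d := by
  rw [meas_Ioo hm hla hrb hc hd, ENNReal.toReal_ofReal (muIoo_nonneg hm hla hrb hc hd hcd)]

lemma meas_Icc_ne_top :
    hm.stieltjesFunction.measure (Set.Icc a b) ≠ ⊤ := by
  rw [StieltjesFunction.measure_Icc]
  exact ENNReal.ofReal_ne_top

lemma key_int (hab : a ≤ b) {P : RDSPartition a b} {u : ℝ → ℝ} (hu : IsStepOn a b u P)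
    {k : ℕ} (hk : k ≤ P.n) :
    IntegrableOn u (Set.Icc a (P.x k)) hm.stieltjesFunction.measure ∧
      ∫ t in Set.Icc a (P.x k), u t ∂hm.stieltjesFunction.measure =
        (∑ i ∈ Finset.range (k + 1), u (P.x i) * muPt a b α (P.x i)) +
        ∑ i ∈ Finset.range k, u ((P.x i + P.x (i + 1)) / 2) * muIoo a b α (P.x i) (P.x (i + 1)) := by
  set μ := hm.stieltjesFunction.measure with hμ
  induction k with
  | zero =>
    have hx0 : P.x 0 = a := P.first
    have hmem : P.x 0 ∈ Set.Icc a b := part_mem P (Nat.zero_le _)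
    have hIcc : Set.Icc a (P.x 0) = {P.x 0} := by rw [hx0, Set.Icc_self]
    have hlt : μ {P.x 0} < ⊤ := by
      rw [meas_singleton hm hla hrb hmem]; exact ENNReal.ofReal_lt_top
    have hint : IntegrableOn u {P.x 0} μ := by
      rw [integrableOn_singleton_iff]
      exact Or.inr hlt
    constructor
    · rw [hIcc]; exact hint
    · rw [hIcc]
      rw [MeasureTheory.Measure.restrict_singleton, MeasureTheory.integral_smul_measure,
        MeasureTheory.integral_dirac, meas_singleton_toReal hm hla hrb hmem]
      simp [meas_singleton_toReal hm hla hrb hmem, smul_eq_mul, mul_comm]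
  | succ k ih =>
    have hkn : k < P.n := hk
    have ihk := ih hkn.le
    have hc : P.x k ∈ Set.Icc a b := part_mem P hkn.le
    have hd : P.x (k + 1) ∈ Set.Icc a b := part_mem P hk
    have hcd : P.x k < P.x (k + 1) := P.mono k hkn
    -- decompose the interval
    have hdecomp : Set.Icc a (P.x (k + 1)) =
        Set.Icc a (P.x k) ∪ (Set.Ioo (P.x k) (P.x (k + 1)) ∪ {P.x (k + 1)}) := by
      rw [← Set.Icc_self (P.x (k+1)), Set.Ioo_union_Icc_eq_Ioc hcd le_rfl,
        Set.Icc_union_Ioc_eq_Icc hc.1 hcd.le]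
    have hd1 : Disjoint (Set.Ioo (P.x k) (P.x (k + 1))) ({P.x (k + 1)} : Set ℝ) := by
      rw [Set.disjoint_singleton_right]
      intro h
      exact absurd h.2 (lt_irrefl _)
    have hd2 : Disjoint (Set.Icc a (P.x k)) (Set.Ioo (P.x k) (P.x (k + 1)) ∪ {P.x (k + 1)}) := by
      rw [Set.disjoint_union_right]
      constructor
      · rw [Set.disjoint_left]
        rintro t ⟨_, h1⟩ ⟨h2, _⟩
        exact absurd h1 (not_le.2 h2)
      · rw [Set.disjoint_singleton_right]
        rintro ⟨_, h1⟩
        exact absurd h1 (not_le.2 hcd)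
    -- integrability on the pieces
    have hltIoo : μ (Set.Ioo (P.x k) (P.x (k + 1))) < ⊤ := by
      rw [meas_Ioo hm hla hrb hc hd]; exact ENNReal.ofReal_lt_top
    have hconst : IntegrableOn (fun _ => u ((P.x k + P.x (k + 1)) / 2))
        (Set.Ioo (P.x k) (P.x (k + 1))) μ := by
      rw [MeasureTheory.integrableOn_const_iff]
      exact Or.inr hltIoo
    have hintIoo : IntegrableOn u (Set.Ioo (P.x k) (P.x (k + 1))) μ := by
      apply hconst.congr_fun _ measurableSet_Ioo
      intro s hs
      exact (hu k hkn s hs).symm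
    have hintPt : IntegrableOn u ({P.x (k + 1)} : Set ℝ) μ := by
      rw [integrableOn_singleton_iff]
      refine Or.inr ?_
      rw [meas_singleton hm hla hrb hd]; exact ENNReal.ofReal_lt_top
    have hintU : IntegrableOn u (Set.Ioo (P.x k) (P.x (k + 1)) ∪ {P.x (k + 1)}) μ :=
      hintIoo.union hintPt
    constructor
    · rw [hdecomp]
      exact ihk.1.union hintU
    · rw [hdecomp]
      rw [MeasureTheory.setIntegral_union hd2 (measurableSet_Ioo.union (measurableSet_singleton _))
        ihk.1 hintU,
        MeasureTheory.setIntegral_union hd1 (measurableSet_singleton _) hintIoo hintPt]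
      have hIoo : ∫ t in Set.Ioo (P.x k) (P.x (k + 1)), u t ∂μ =
          u ((P.x k + P.x (k + 1)) / 2) * muIoo a b α (P.x k) (P.x (k + 1)) := by
        rw [MeasureTheory.setIntegral_congr_fun measurableSet_Ioo
          (fun s hs => hu k hkn s hs), MeasureTheory.setIntegral_const, measureReal_def,
          meas_Ioo_toReal hm hla hrb hc hd hcd, smul_eq_mul, mul_comm]
      have hPt : ∫ t in ({P.x (k + 1)} : Set ℝ), u t ∂μ =
          u (P.x (k + 1)) * muPt a b α (P.x (k + 1)) := by
        rw [MeasureTheory.Measure.restrict_singleton, MeasureTheory.integral_smul_measure,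
          MeasureTheory.integral_dirac, meas_singleton_toReal hm hla hrb hd, smul_eq_mul,
          mul_comm]
      rw [hIoo, hPt, ihk.2,
        Finset.sum_range_succ (f := fun i => u (P.x i) * muPt a b α (P.x i)) (n := k + 1),
        Finset.sum_range_succ
          (f := fun i => u ((P.x i + P.x (i + 1)) / 2) * muIoo a b α (P.x i) (P.x (i + 1)))
          (n := k)]
      ring

lemma stepInt_eq_integral (hab : a ≤ b) {P : RDSPartition a b} {u : ℝ → ℝ}
    (hu : IsStepOn a b u P) :
    IntegrableOn u (Set.Icc a b) hm.stieltjesFunction.measure ∧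
      ∫ t in Set.Icc a b, u t ∂hm.stieltjesFunction.measure = stepInt a b α P u := by
  have h := key_int hm hla hrb hab hu (le_refl P.n)
  rw [P.last] at h
  exact h

end Meas

section Core

variable {a b : ℝ} {α f : ℝ → ℝ}

def unifP (a b : ℝ) (hab : a < b) (n : ℕ) (hn : 0 < n) : RDSPartition a b where
  n := n
  x := fun i => a + i * ((b - a) / n)
  mono := by
    intro i _
    have hn0 : (0:ℝ) < n := by exact_mod_cast hn
    have hh0 : 0 < (b - a) / n := div_pos (sub_pos.2 hab) hn0
    have hc : ((i + 1 : ℕ) : ℝ) * ((b - a) / n) = (i : ℝ) * ((b - a) / n) + (b - a) / n := by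
      push_cast; ring
    simp only [hc]
    linarith
  first := by simp
  last := by
    have hn0 : (n:ℝ) ≠ 0 := by
      have : (0:ℝ) < n := by exact_mod_cast hn
      exact ne_of_gt this
    have hc : (n:ℝ) * ((b - a) / n) = b - a := by field_simp
    simp only [hc]
    ring

lemma unifP_x (a b : ℝ) (hab : a < b) (n : ℕ) (hn : 0 < n) (i : ℕ) :
    (unifP a b hab n hn).x i = a + i * ((b - a) / n) := rfl

lemma exists_approx (hab : a < b) (hf : ContinuousOn f (Set.Icc a b)) {ε : ℝ} (hε : 0 < ε) :
    ∃ u v : ℝ → ℝ, ∃ P : RDSPartition a b,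
      IsStepOn a b u P ∧ IsStepOn a b v P ∧
      (∀ t ∈ Set.Icc a b, v t ≤ f t) ∧ (∀ t ∈ Set.Icc a b, f t ≤ u t) ∧
      (∀ t ∈ Set.Icc a b, u t ≤ v t + 2 * ε) := by
  obtain ⟨δ, hδ, H⟩ := Metric.uniformContinuousOn_iff.1
    ((isCompact_Icc).uniformContinuousOn_of_continuous hf) ε hε
  set n : ℕ := ⌈(b - a) / δ⌉₊ + 1 with hn
  have hnpos : 0 < n := Nat.succ_pos _
  have hn0 : (0:ℝ) < n := by exact_mod_cast hnpos
  set h : ℝ := (b - a) / n with hh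
  have hh0 : 0 < h := div_pos (sub_pos.2 hab) hn0
  have hhδ : h < δ := by
    rw [hh, div_lt_iff₀ hn0]
    have h1 : (b - a) / δ ≤ (⌈(b - a) / δ⌉₊ : ℝ) := Nat.le_ceil _
    have h2 : ((⌈(b - a) / δ⌉₊ : ℝ)) < n := by rw [hn]; push_cast; linarith
    have h3 : b - a ≤ (⌈(b - a) / δ⌉₊ : ℝ) * δ := (div_le_iff₀ hδ).1 h1
    calc b - a ≤ (⌈(b - a) / δ⌉₊ : ℝ) * δ := h3
      _ < (n : ℝ) * δ := mul_lt_mul_of_pos_right h2 hδ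
      _ = δ * n := mul_comm _ _
  set P : RDSPartition a b := unifP a b hab n hnpos with hPdef
  have hPn : P.n = n := rfl
  have hPx : ∀ i, P.x i = a + i * h := fun i => rfl
  have hstep : ∀ i, i < P.n → P.x (i + 1) = P.x i + h := by
    intro i _
    rw [hPx, hPx]
    push_cast
    ring
  -- the midpoint of each interval is close to every point of the interval
  have hclose : ∀ i, i < P.n → ∀ t ∈ Set.Ioo (P.x i) (P.x (i + 1)),
      dist t ((P.x i + P.x (i + 1)) / 2) < δ := by
    intro i hi t ht
    have h1 := hstep i hi
    rw [Real.dist_eq, abs_sub_lt_iff]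
    constructor
    · have := ht.2
      rw [h1] at this ⊢
      linarith
    · have := ht.1
      rw [h1]
      linarith
  have hmid : ∀ i, i < P.n → ((P.x i + P.x (i + 1)) / 2) ∈ Set.Ioo (P.x i) (P.x (i + 1)) := by
    intro i hi
    have := P.mono i hi
    constructor <;> linarith
  refine ⟨stepApprox a b P f ε, stepApprox a b P f (-ε), P,
    isStepOn_stepApprox P f ε, isStepOn_stepApprox P f (-ε), ?_, ?_, ?_⟩
  · intro t ht
    rcases part_cases P ht with ⟨j, hj, rfl⟩ | ⟨i, hi, hti⟩
    · rw [stepApprox_of_node P f (-ε) hj]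
    · rw [stepApprox_of_mem P f (-ε) hi hti]
      have hmem := part_Ioo_subset P hi
      have hdist := H t ht _ (hmem (hmid i hi)) (hclose i hi t hti)
      rw [Real.dist_eq, abs_sub_lt_iff] at hdist
      linarith [hdist.2]
  · intro t ht
    rcases part_cases P ht with ⟨j, hj, rfl⟩ | ⟨i, hi, hti⟩
    · rw [stepApprox_of_node P f ε hj]
    · rw [stepApprox_of_mem P f ε hi hti]
      have hmem := part_Ioo_subset P hi
      have hdist := H t ht _ (hmem (hmid i hi)) (hclose i hi t hti)
      rw [Real.dist_eq, abs_sub_lt_iff] at hdist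
      linarith [hdist.1]
  · intro t ht
    rcases part_cases P ht with ⟨j, hj, rfl⟩ | ⟨i, hi, hti⟩
    · rw [stepApprox_of_node P f ε hj, stepApprox_of_node P f (-ε) hj]
      linarith
    · rw [stepApprox_of_mem P f ε hi hti, stepApprox_of_mem P f (-ε) hi hti]
      linarith

lemma inc_core (hab : a < b) (hm : Monotone α) (hla : ∀ t, t ≤ a → α t = α a)
    (hrb : ∀ t, b ≤ t → α t = α b) (hf : ContinuousOn f (Set.Icc a b)) :
    RDSIntegrableInc a b α f := by
  set μ := hm.stieltjesFunction.measure with hμ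
  unfold RDSIntegrableInc lowerRDS upperRDS
  set L := { r | ∃ (v : ℝ → ℝ) (P : RDSPartition a b), IsStepOn a b v P ∧
    (∀ t ∈ Set.Icc a b, v t ≤ f t) ∧ r = stepInt a b α P v } with hLdef
  set U := { r | ∃ (u : ℝ → ℝ) (P : RDSPartition a b), IsStepOn a b u P ∧
    (∀ t ∈ Set.Icc a b, f t ≤ u t) ∧ r = stepInt a b α P u } with hUdef
  have key : ∀ r ∈ L, ∀ s ∈ U, r ≤ s := by
    rintro r ⟨v, P, hv, hvf, rfl⟩ s ⟨u, Q, hu, hfu, rfl⟩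
    have h1 := stepInt_eq_integral hm hla hrb hab.le hv
    have h2 := stepInt_eq_integral hm hla hrb hab.le hu
    rw [← h1.2, ← h2.2]
    exact MeasureTheory.setIntegral_mono_on h1.1 h2.1 measurableSet_Icc
      (fun t ht => (hvf t ht).trans (hfu t ht))
  obtain ⟨u1, v1, P1, hsu1, hsv1, hv1f, hfu1, _⟩ := exists_approx hab hf one_pos
  have hLne : L.Nonempty := ⟨_, v1, P1, hsv1, hv1f, rfl⟩
  have hUne : U.Nonempty := ⟨_, u1, P1, hsu1, hfu1, rfl⟩
  have hbddA : BddAbove L :=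
    ⟨stepInt a b α P1 u1, fun r hr => key r hr _ ⟨u1, P1, hsu1, hfu1, rfl⟩⟩
  have hbddB : BddBelow U :=
    ⟨stepInt a b α P1 v1, fun s hs => key _ ⟨v1, P1, hsv1, hv1f, rfl⟩ s hs⟩
  apply le_antisymm
  · exact csSup_le hLne (fun r hr => le_csInf hUne (fun s hs => key r hr s hs))
  · apply le_of_forall_pos_le_add
    intro ε hε
    set C : ℝ := (μ (Set.Icc a b)).toReal + 1 with hC
    have hC1 : 0 ≤ (μ (Set.Icc a b)).toReal := ENNReal.toReal_nonneg
    have hC0 : 0 < C := by rw [hC]; linarith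
    obtain ⟨u, v, P, hsu, hsv, hvf, hfu, huv⟩ :=
      exists_approx hab hf (show (0:ℝ) < ε / (2 * C) by positivity)
    have h1 := stepInt_eq_integral hm hla hrb hab.le hsu
    have h2 := stepInt_eq_integral hm hla hrb hab.le hsv
    have hμfin : μ (Set.Icc a b) < ⊤ := lt_top_iff_ne_top.2 (meas_Icc_ne_top hm hla hrb)
    have hconst : MeasureTheory.IntegrableOn (fun _ : ℝ => 2 * (ε / (2 * C)))
        (Set.Icc a b) μ := by
      rw [MeasureTheory.integrableOn_const_iff]
      exact Or.inr hμfin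
    have hcomp : ∫ t in Set.Icc a b, u t ∂μ ≤
        ∫ t in Set.Icc a b, (v t + 2 * (ε / (2 * C))) ∂μ :=
      MeasureTheory.setIntegral_mono_on h1.1 (h2.1.add hconst) measurableSet_Icc huv
    have hadd : ∫ t in Set.Icc a b, (v t + 2 * (ε / (2 * C))) ∂μ =
        (∫ t in Set.Icc a b, v t ∂μ) + (μ (Set.Icc a b)).toReal * (2 * (ε / (2 * C))) := by
      rw [MeasureTheory.integral_add h2.1 hconst, MeasureTheory.setIntegral_const, measureReal_def, smul_eq_mul]
    have hmass : (μ (Set.Icc a b)).toReal * (2 * (ε / (2 * C))) ≤ ε := by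
      have hCle : (μ (Set.Icc a b)).toReal ≤ C := by rw [hC]; linarith
      have heq : 2 * (ε / (2 * C)) = ε / C := by
        field_simp
      rw [heq]
      calc (μ (Set.Icc a b)).toReal * (ε / C) ≤ C * (ε / C) :=
            mul_le_mul_of_nonneg_right hCle (by positivity)
        _ = ε := by field_simp
    have hvL : stepInt a b α P v ∈ L := ⟨v, P, hsv, hvf, rfl⟩
    have huU : stepInt a b α P u ∈ U := ⟨u, P, hsu, hfu, rfl⟩
    calc sInf U ≤ stepInt a b α P u := csInf_le hbddB huU
      _ = ∫ t in Set.Icc a b, u t ∂μ := h1.2.symm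
      _ ≤ ∫ t in Set.Icc a b, (v t + 2 * (ε / (2 * C))) ∂μ := hcomp
      _ = (∫ t in Set.Icc a b, v t ∂μ) +
            (μ (Set.Icc a b)).toReal * (2 * (ε / (2 * C))) := hadd
      _ ≤ sSup L + ε := by
          have hvle : (∫ t in Set.Icc a b, v t ∂μ) ≤ sSup L := by
            rw [h2.2]
            exact le_csSup hbddA hvL
          linarith

end Core

end RDSaux


theorem stmt15 (a b : ℝ) (hab : a < b) (α f : ℝ → ℝ)
    (hf : ContinuousOn f (Set.Icc a b)) (hα : BoundedVariationOn α (Set.Icc a b)) :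
    RDSIntegrable a b α f := by
  obtain ⟨p, q, hp, hq, hpq⟩ :=
    hα.locallyBoundedVariationOn.exists_monotoneOn_sub_monotoneOn
  set c : ℝ → ℝ := fun t => max a (min b t) with hc
  have hcmono : Monotone c := fun s t hst => max_le_max le_rfl (min_le_min le_rfl hst)
  have hcmem : ∀ t, c t ∈ Set.Icc a b := fun t =>
    ⟨le_max_left _ _, max_le hab.le (min_le_left _ _)⟩
  have hcid : ∀ t ∈ Set.Icc a b, c t = t := by
    intro t ht
    rw [hc]
    simp only []
    rw [min_eq_right ht.2, max_eq_right ht.1]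
  have hcla : ∀ t, t ≤ a → c t = a := by
    intro t hta
    rw [hc]
    simp only []
    rw [min_eq_right (hta.trans hab.le), max_eq_left hta]
  have hcrb : ∀ t, b ≤ t → c t = b := by
    intro t htb
    rw [hc]
    simp only []
    rw [min_eq_left htb, max_eq_right hab.le]
  set p' : ℝ → ℝ := fun t => p (c t) with hp'
  set q' : ℝ → ℝ := fun t => q (c t) with hq'
  have hp'mono : Monotone p' := fun s t hst => hp (hcmem s) (hcmem t) (hcmono hst)
  have hq'mono : Monotone q' := fun s t hst => hq (hcmem s) (hcmem t) (hcmono hst)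
  have hp'la : ∀ t, t ≤ a → p' t = p' a := by
    intro t hta
    rw [hp']
    simp only []
    rw [hcla t hta, hcid a ⟨le_rfl, hab.le⟩]
  have hp'rb : ∀ t, b ≤ t → p' t = p' b := by
    intro t htb
    rw [hp']
    simp only []
    rw [hcrb t htb, hcid b ⟨hab.le, le_rfl⟩]
  have hq'la : ∀ t, t ≤ a → q' t = q' a := by
    intro t hta
    rw [hq']
    simp only []
    rw [hcla t hta, hcid a ⟨le_rfl, hab.le⟩]
  have hq'rb : ∀ t, b ≤ t → q' t = q' b := by
    intro t htb
    rw [hq']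
    simp only []
    rw [hcrb t htb, hcid b ⟨hab.le, le_rfl⟩]
  refine ⟨p', q', hp'mono.monotoneOn _, hq'mono.monotoneOn _, ?_, ?_, ?_⟩
  · intro t ht
    have : α t = p t - q t := by rw [hpq]; rfl
    rw [this, hp', hq']
    simp only []
    rw [hcid t ht]
  · exact inc_core hab hp'mono hp'la hp'rb hf
  · exact inc_core hab hq'mono hq'la hq'rb hf
end
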